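/- arXiv:1609.03081 — 3 statements merged into one kernel-verified Lean document; each statement's English description precedes it below -/
import Mathlib

section
/- For every bilinear form T : ℓ_4^n × ℓ_4^n → ℝ, (∑_{i,j=1}^n |T(e_i,e_j)|^2)^{1/2} ≤ √2 · ‖T‖. -/
open Finset
open scoped ENNReal

namespace HL4

noncomputable def R : Bool → ℝ := fun b => if b then 1 else -1

lemma sum_signs (m : ℕ) (f : (Fin (m+1) → Bool) → ℝ) :
    ∑ ε : Fin (m+1) → Bool, f ε
      = ∑ b : Bool, ∑ ε : Fin m → Bool, f (Fin.cons (α := fun _ => Bool) b ε) := by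
  have h1 : ∑ ε : Fin (m+1) → Bool, f ε
      = ∑ p : Bool × (Fin m → Bool), f (Fin.cons (α := fun _ => Bool) p.1 p.2) :=
    (Fintype.sum_equiv (Fin.consEquiv (fun _ => Bool)) _ _ (fun p => rfl)).symm
  rw [h1, Fintype.sum_prod_type]

lemma S_cons (m : ℕ) (c : Fin (m+1) → ℝ) (b : Bool) (ε : Fin m → Bool) :
    ∑ j, R (Fin.cons (α := fun _ => Bool) b ε j) * c j
      = R b * c 0 + ∑ j, R (ε j) * c (Fin.succ j) := by
  rw [Fin.sum_univ_succ]
  simp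

lemma card_signs (m : ℕ) : (Finset.univ : Finset (Fin m → Bool)).card = 2 ^ m := by
  simp [Fintype.card_fun]

/-- second moment identity -/
lemma m2 : ∀ (m : ℕ) (c : Fin m → ℝ),
    ∑ ε : Fin m → Bool, (∑ j, R (ε j) * c j) ^ 2 = 2 ^ m * ∑ j, c j ^ 2 := by
  intro m
  induction m with
  | zero => intro c; simp
  | succ m ih =>
    intro c
    rw [sum_signs m fun ε => (∑ j, R (ε j) * c j) ^ 2]
    have key : ∀ b : Bool, ∑ ε : Fin m → Bool,
          (∑ j, R (Fin.cons (α := fun _ => Bool) b ε j) * c j) ^ 2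
        = ∑ ε : Fin m → Bool, ((R b * c 0) ^ 2
            + 2 * (R b * c 0) * (∑ j, R (ε j) * c (Fin.succ j))
            + (∑ j, R (ε j) * c (Fin.succ j)) ^ 2) := by
      intro b
      refine Finset.sum_congr rfl fun ε _ => ?_
      rw [S_cons]; ring
    simp only [key]
    rw [Fintype.sum_bool]
    simp only [Finset.sum_add_distrib, Finset.sum_const, card_signs, nsmul_eq_mul,
      ← Finset.mul_sum, ih (fun j => c (Fin.succ j))]
    have hR1 : R true = 1 := rfl
    have hR2 : R false = -1 := rfl
    rw [hR1, hR2, Fin.sum_univ_succ (f := fun j => c j ^ 2)]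
    push_cast
    ring

/-- fourth moment bound -/
lemma m4 : ∀ (m : ℕ) (c : Fin m → ℝ),
    ∑ ε : Fin m → Bool, (∑ j, R (ε j) * c j) ^ 4
      ≤ 3 * 2 ^ m * (∑ j, c j ^ 2) ^ 2 := by
  intro m
  induction m with
  | zero => intro c; simp
  | succ m ih =>
    intro c
    rw [sum_signs m fun ε => (∑ j, R (ε j) * c j) ^ 4]
    have key : ∀ b : Bool, ∑ ε : Fin m → Bool,
          (∑ j, R (Fin.cons (α := fun _ => Bool) b ε j) * c j) ^ 4
        = ∑ ε : Fin m → Bool, ((R b * c 0) ^ 4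
            + 4 * (R b * c 0) ^ 3 * (∑ j, R (ε j) * c (Fin.succ j))
            + 6 * (R b * c 0) ^ 2 * (∑ j, R (ε j) * c (Fin.succ j)) ^ 2
            + 4 * (R b * c 0) * (∑ j, R (ε j) * c (Fin.succ j)) ^ 3
            + (∑ j, R (ε j) * c (Fin.succ j)) ^ 4) := by
      intro b
      refine Finset.sum_congr rfl fun ε _ => ?_
      rw [S_cons]; ring
    simp only [key]
    rw [Fintype.sum_bool]
    have hR1 : R true = 1 := rfl
    have hR2 : R false = -1 := rfl
    simp only [Finset.sum_add_distrib, Finset.sum_const, card_signs, nsmul_eq_mul,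
      ← Finset.mul_sum, hR1, hR2]
    rw [Fin.sum_univ_succ (f := fun j => c j ^ 2)]
    have h2 := m2 m (fun j => c (Fin.succ j))
    have h4 := ih (fun j => c (Fin.succ j))
    set σ2 := ∑ j : Fin m, c (Fin.succ j) ^ 2 with hσ2
    have hσ2n : 0 ≤ σ2 := Finset.sum_nonneg fun j _ => sq_nonneg _
    set S4 := ∑ ε : Fin m → Bool, (∑ j, R (ε j) * c (Fin.succ j)) ^ 4 with hS4
    set S1 := ∑ ε : Fin m → Bool, (∑ j, R (ε j) * c (Fin.succ j)) with hS1
    set S3 := ∑ ε : Fin m → Bool, (∑ j, R (ε j) * c (Fin.succ j)) ^ 3 with hS3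
    rw [h2]
    have hp : (0:ℝ) < 2 ^ m := by positivity
    have hpow : (2:ℝ) ^ (m+1) = 2 * 2 ^ m := by ring
    push_cast
    rw [hpow]
    nlinarith [mul_nonneg (le_of_lt hp) (sq_nonneg (c 0 ^ 2)),
      mul_nonneg (mul_nonneg (le_of_lt hp) (sq_nonneg (c 0))) hσ2n]


-- placeholders (proved in A.lean)
/-- Khintchine-type inequality with constant 3^(1/3). -/
lemma kh (m : ℕ) (c : Fin m → ℝ) :
    (∑ j, c j ^ 2) ^ ((2:ℝ)/3)
      ≤ 3 ^ ((1:ℝ)/3) / 2 ^ m * ∑ ε : Fin m → Bool, |∑ j, R (ε j) * c j| ^ ((4:ℝ)/3) := by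
  set σ2 := ∑ j, c j ^ 2 with hσ2
  have hσ2n : 0 ≤ σ2 := Finset.sum_nonneg fun j _ => sq_nonneg _
  set S : (Fin m → Bool) → ℝ := fun ε => ∑ j, R (ε j) * c j with hS
  set Q := ∑ ε : Fin m → Bool, |S ε| ^ ((4:ℝ)/3) with hQ
  have hQn : 0 ≤ Q := Finset.sum_nonneg fun ε _ => Real.rpow_nonneg (abs_nonneg _) _
  rcases eq_or_lt_of_le hσ2n with h0 | hpos
  · rw [← h0, Real.zero_rpow (by norm_num)]
    positivity
  set N : ℝ := 2 ^ m with hN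
  have hNpos : (0:ℝ) < N := by positivity
  set E83 := ∑ ε : Fin m → Bool, |S ε| ^ ((8:ℝ)/3) with hE83
  have hE83n : 0 ≤ E83 := Finset.sum_nonneg fun ε _ => Real.rpow_nonneg (abs_nonneg _) _
  -- CS1 : (∑ S²)² ≤ Q * E83
  have cs1 : (∑ ε : Fin m → Bool, S ε ^ 2) ^ 2 ≤ Q * E83 := by
    have := Finset.sum_mul_sq_le_sq_mul_sq Finset.univ
      (fun ε => |S ε| ^ ((2:ℝ)/3)) (fun ε => |S ε| ^ ((4:ℝ)/3))
    calc (∑ ε : Fin m → Bool, S ε ^ 2) ^ 2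
        = (∑ ε : Fin m → Bool, |S ε| ^ ((2:ℝ)/3) * |S ε| ^ ((4:ℝ)/3)) ^ 2 := by
          congr 1; refine Finset.sum_congr rfl fun ε _ => ?_
          rw [← Real.rpow_add' (abs_nonneg _) (by norm_num)]
          norm_num
      _ ≤ (∑ ε : Fin m → Bool, (|S ε| ^ ((2:ℝ)/3)) ^ 2) *
            ∑ ε : Fin m → Bool, (|S ε| ^ ((4:ℝ)/3)) ^ 2 := this
      _ = Q * E83 := by
          congr 1 <;> refine Finset.sum_congr rfl fun ε _ => ?_
          · rw [← Real.rpow_natCast (|S ε| ^ ((2:ℝ)/3)) 2, ← Real.rpow_mul (abs_nonneg _)]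
            norm_num
          · rw [← Real.rpow_natCast (|S ε| ^ ((4:ℝ)/3)) 2, ← Real.rpow_mul (abs_nonneg _)]
            norm_num
  -- CS2 : E83² ≤ Q * ∑ S⁴
  have cs2 : E83 ^ 2 ≤ Q * ∑ ε : Fin m → Bool, S ε ^ 4 := by
    have := Finset.sum_mul_sq_le_sq_mul_sq Finset.univ
      (fun ε => |S ε| ^ ((2:ℝ)/3)) (fun ε => S ε ^ 2)
    calc E83 ^ 2 = (∑ ε : Fin m → Bool, |S ε| ^ ((2:ℝ)/3) * S ε ^ 2) ^ 2 := by
          congr 1; refine Finset.sum_congr rfl fun ε _ => ?_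
          rw [← sq_abs (S ε), show ((|S ε|)^(2:ℕ) = |S ε| ^ ((2:ℝ))) by
            rw [show ((2:ℝ) = (2:ℕ)) by norm_num, Real.rpow_natCast],
            ← Real.rpow_add' (abs_nonneg _) (by norm_num)]
          norm_num
      _ ≤ (∑ ε : Fin m → Bool, (|S ε| ^ ((2:ℝ)/3)) ^ 2) *
            ∑ ε : Fin m → Bool, (S ε ^ 2) ^ 2 := this
      _ = Q * ∑ ε : Fin m → Bool, S ε ^ 4 := by
          congr 1
          · refine Finset.sum_congr rfl fun ε _ => ?_
            rw [← Real.rpow_natCast (|S ε| ^ ((2:ℝ)/3)) 2, ← Real.rpow_mul (abs_nonneg _)]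
            norm_num
          · refine Finset.sum_congr rfl fun ε _ => ?_; ring
  have hm2 : ∑ ε : Fin m → Bool, S ε ^ 2 = N * σ2 := m2 m c
  have hm4 : ∑ ε : Fin m → Bool, S ε ^ 4 ≤ 3 * N * σ2 ^ 2 := m4 m c
  -- N³ σ2² ≤ 3 Q³
  have key : N ^ 3 * σ2 ^ 2 ≤ 3 * Q ^ 3 := by
    have hE2n : 0 ≤ N * σ2 := le_of_lt (by positivity)
    have c1 : (N * σ2) ^ 4 ≤ Q ^ 3 * (3 * N * σ2 ^ 2) := by
      have h1 : ((N * σ2) ^ 2) ^ 2 ≤ (Q * E83) ^ 2 := by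
        apply pow_le_pow_left₀ (sq_nonneg _)
        rw [← hm2]; exact cs1
      calc (N * σ2) ^ 4 = ((N * σ2) ^ 2) ^ 2 := by ring
        _ ≤ (Q * E83) ^ 2 := h1
        _ = Q ^ 2 * E83 ^ 2 := by ring
        _ ≤ Q ^ 2 * (Q * ∑ ε : Fin m → Bool, S ε ^ 4) := by
            apply mul_le_mul_of_nonneg_left cs2 (sq_nonneg _)
        _ ≤ Q ^ 2 * (Q * (3 * N * σ2 ^ 2)) := by
            apply mul_le_mul_of_nonneg_left _ (sq_nonneg _)
            exact mul_le_mul_of_nonneg_left hm4 hQn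
        _ = Q ^ 3 * (3 * N * σ2 ^ 2) := by ring
    have hc : 0 < N * σ2 ^ 2 := by positivity
    have e1 : (N * σ2) ^ 4 = (N ^ 3 * σ2 ^ 2) * (N * σ2 ^ 2) := by ring
    have e2 : Q ^ 3 * (3 * N * σ2 ^ 2) = (3 * Q ^ 3) * (N * σ2 ^ 2) := by ring
    rw [e1, e2] at c1
    exact le_of_mul_le_mul_right c1 hc
  -- extract cube roots
  have h13 : (0:ℝ) < 3 := by norm_num
  have cube : (N ^ 3 * σ2 ^ 2) ^ ((1:ℝ)/3) ≤ (3 * Q ^ 3) ^ ((1:ℝ)/3) :=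
    Real.rpow_le_rpow (by positivity) key (by norm_num)
  have lhs_eq : (N ^ 3 * σ2 ^ 2) ^ ((1:ℝ)/3) = N * σ2 ^ ((2:ℝ)/3) := by
    rw [Real.mul_rpow (by positivity) (sq_nonneg _),
      ← Real.rpow_natCast N 3, ← Real.rpow_natCast σ2 2,
      ← Real.rpow_mul (le_of_lt hNpos), ← Real.rpow_mul hσ2n]
    norm_num
  have rhs_eq : (3 * Q ^ 3) ^ ((1:ℝ)/3) = 3 ^ ((1:ℝ)/3) * Q := by
    rw [Real.mul_rpow (by norm_num) (by positivity),
      ← Real.rpow_natCast Q 3, ← Real.rpow_mul hQn]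
    norm_num
  rw [lhs_eq, rhs_eq] at cube
  rw [div_mul_eq_mul_div, le_div_iff₀ hNpos]
  calc σ2 ^ ((2:ℝ)/3) * N = N * σ2 ^ ((2:ℝ)/3) := by ring
    _ ≤ 3 ^ ((1:ℝ)/3) * Q := cube

/-- ℓ^{4/3} norm bound for coefficient rows of a bounded bilinear form -/
lemma dual (n : ℕ) (a : Fin n → Fin n → ℝ) (M : ℝ) (hM : 0 ≤ M)
    (H : ∀ x y : Fin n → ℝ, |∑ i, ∑ j, x i * y j * a i j|
        ≤ M * (∑ i, x i ^ 4) ^ ((1:ℝ)/4) * (∑ j, y j ^ 4) ^ ((1:ℝ)/4))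
    (y : Fin n → ℝ) :
    ∑ i, |∑ j, y j * a i j| ^ ((4:ℝ)/3)
      ≤ (M * (∑ j, y j ^ 4) ^ ((1:ℝ)/4)) ^ ((4:ℝ)/3) := by
  set L : Fin n → ℝ := fun i => ∑ j, y j * a i j with hL
  set W := ∑ i, |L i| ^ ((4:ℝ)/3) with hW
  have hWn : 0 ≤ W := Finset.sum_nonneg fun i _ => Real.rpow_nonneg (abs_nonneg _) _
  set Ny := (∑ j, y j ^ 4) ^ ((1:ℝ)/4) with hNy
  have hNyn : 0 ≤ Ny := Real.rpow_nonneg (Finset.sum_nonneg fun j _ => by positivity) _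
  set x : Fin n → ℝ := fun i => (if 0 ≤ L i then (1:ℝ) else -1) * |L i| ^ ((1:ℝ)/3) with hx
  have hxL : ∀ i, x i * L i = |L i| ^ ((4:ℝ)/3) := by
    intro i
    have hsgn : (if 0 ≤ L i then (1:ℝ) else -1) * L i = |L i| := by
      by_cases h : 0 ≤ L i
      · simp [h, abs_of_nonneg h]
      · simp [h, abs_of_neg (lt_of_not_ge h)]
    calc x i * L i = |L i| ^ ((1:ℝ)/3) * ((if 0 ≤ L i then (1:ℝ) else -1) * L i) := by
          rw [hx]; ring
      _ = |L i| ^ ((1:ℝ)/3) * |L i| ^ (1:ℝ) := by rw [hsgn, Real.rpow_one]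
      _ = |L i| ^ ((4:ℝ)/3) := by
          rw [← Real.rpow_add' (abs_nonneg _) (by norm_num)]; norm_num
  have hx4 : ∀ i, x i ^ 4 = |L i| ^ ((4:ℝ)/3) := by
    intro i
    have h4 : ((if 0 ≤ L i then (1:ℝ) else -1)) ^ 4 = 1 := by
      by_cases h : 0 ≤ L i <;> simp [h] <;> norm_num
    calc x i ^ 4 = ((if 0 ≤ L i then (1:ℝ) else -1)) ^ 4 * (|L i| ^ ((1:ℝ)/3)) ^ 4 := by
          rw [hx]; ring
      _ = (|L i| ^ ((1:ℝ)/3)) ^ 4 := by rw [h4, one_mul]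
      _ = |L i| ^ ((4:ℝ)/3) := by
          rw [← Real.rpow_natCast (|L i| ^ ((1:ℝ)/3)) 4, ← Real.rpow_mul (abs_nonneg _)]
          norm_num
  have hsum : ∑ i, ∑ j, x i * y j * a i j = W := by
    rw [hW]
    refine Finset.sum_congr rfl fun i _ => ?_
    rw [← hxL i, hL]
    rw [Finset.mul_sum]
    refine Finset.sum_congr rfl fun j _ => by ring
  have hHa := H x y
  rw [hsum, abs_of_nonneg hWn] at hHa
  have hx4s : ∑ i, x i ^ 4 = W := by
    rw [hW]; exact Finset.sum_congr rfl fun i _ => hx4 i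
  rw [hx4s] at hHa
  -- hHa : W ≤ M * W^{1/4} * Ny
  rcases eq_or_lt_of_le hWn with h0 | hWpos
  · rw [← h0]; positivity
  have hW14 : (0:ℝ) < W ^ ((1:ℝ)/4) := Real.rpow_pos_of_pos hWpos _
  have hW34 : W ^ ((3:ℝ)/4) ≤ M * Ny := by
    have hsplit : W = W ^ ((3:ℝ)/4) * W ^ ((1:ℝ)/4) := by
      rw [← Real.rpow_add' (le_of_lt hWpos) (by norm_num)]; norm_num
    have : W ^ ((3:ℝ)/4) * W ^ ((1:ℝ)/4) ≤ (M * Ny) * W ^ ((1:ℝ)/4) := by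
      rw [← hsplit]
      calc W ≤ M * W ^ ((1:ℝ)/4) * Ny := hHa
        _ = (M * Ny) * W ^ ((1:ℝ)/4) := by ring
    exact le_of_mul_le_mul_right this hW14
  calc W = (W ^ ((3:ℝ)/4)) ^ ((4:ℝ)/3) := by
        rw [← Real.rpow_mul (le_of_lt hWpos)]; norm_num
    _ ≤ (M * Ny) ^ ((4:ℝ)/3) :=
        Real.rpow_le_rpow (Real.rpow_nonneg (le_of_lt hWpos) _) hW34 (by norm_num)


/-- weighted mixed-norm row estimate -/
lemma rowbound (n : ℕ) (a : Fin n → Fin n → ℝ) (M : ℝ) (hM : 0 ≤ M)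
    (H : ∀ x y : Fin n → ℝ, |∑ i, ∑ j, x i * y j * a i j|
        ≤ M * (∑ i, x i ^ 4) ^ ((1:ℝ)/4) * (∑ j, y j ^ 4) ^ ((1:ℝ)/4))
    (hP : 0 < ∑ i, ∑ j, a i j ^ 2) :
    ∑ i, (∑ j, a i j ^ 2 * (∑ k, a k j ^ 2) ^ ((1:ℝ)/2)) ^ ((2:ℝ)/3)
      ≤ 3 ^ ((1:ℝ)/3) * M ^ ((4:ℝ)/3) * (∑ i, ∑ j, a i j ^ 2) ^ ((1:ℝ)/3) := by
  set P := ∑ i, ∑ j, a i j ^ 2 with hPdef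
  set C : Fin n → ℝ := fun j => ∑ k, a k j ^ 2 with hC
  have hCn : ∀ j, 0 ≤ C j := fun j => Finset.sum_nonneg fun k _ => sq_nonneg _
  set A : Fin n → ℝ := fun i => ∑ j, a i j ^ 2 * C j ^ ((1:ℝ)/2) with hA
  have hAn : ∀ i, 0 ≤ A i :=
    fun i => Finset.sum_nonneg fun j _ =>
      mul_nonneg (sq_nonneg _) (Real.rpow_nonneg (hCn j) _)
  set t : Fin n → ℝ := fun j => (C j / P) ^ ((1:ℝ)/4) with ht
  have htn : ∀ j, 0 ≤ t j := fun j => Real.rpow_nonneg (by positivity) _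
  -- ∑ t^4 = 1
  have ht4 : ∑ j, t j ^ 4 = 1 := by
    have : ∀ j, t j ^ 4 = C j / P := by
      intro j
      rw [ht]
      rw [← Real.rpow_natCast ((C j / P) ^ ((1:ℝ)/4)) 4, ← Real.rpow_mul (by positivity)]
      norm_num
    rw [Finset.sum_congr rfl fun j _ => this j, ← Finset.sum_div]
    rw [hC, hPdef, Finset.sum_comm]
    field_simp
    exact div_self hP.ne'
  -- per i : identify σ² with A i / √P
  have hsig : ∀ i, ∑ j, (t j * a i j) ^ 2 = A i / P ^ ((1:ℝ)/2) := by
    intro i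
    show ∑ j, (t j * a i j) ^ 2 = (∑ j, a i j ^ 2 * C j ^ ((1:ℝ)/2)) / P ^ ((1:ℝ)/2)
    rw [Finset.sum_div]
    refine Finset.sum_congr rfl fun j _ => ?_
    have ht2 : t j ^ 2 = C j ^ ((1:ℝ)/2) / P ^ ((1:ℝ)/2) := by
      rw [ht, ← Real.rpow_natCast ((C j / P) ^ ((1:ℝ)/4)) 2, ← Real.rpow_mul (by positivity)]
      norm_num
      rw [Real.div_rpow (hCn j) (le_of_lt hP)]
    rw [mul_pow, ht2]
    ring
  -- apply kh per i and sum
  have main : ∑ i, (A i / P ^ ((1:ℝ)/2)) ^ ((2:ℝ)/3)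
      ≤ 3 ^ ((1:ℝ)/3) * M ^ ((4:ℝ)/3) := by
    have step1 : ∀ i, (A i / P ^ ((1:ℝ)/2)) ^ ((2:ℝ)/3)
        ≤ 3 ^ ((1:ℝ)/3) / 2 ^ n *
          ∑ ε : Fin n → Bool, |∑ j, R (ε j) * (t j * a i j)| ^ ((4:ℝ)/3) := by
      intro i
      rw [← hsig i]
      exact kh n (fun j => t j * a i j)
    calc ∑ i, (A i / P ^ ((1:ℝ)/2)) ^ ((2:ℝ)/3)
        ≤ ∑ i, (3 ^ ((1:ℝ)/3) / 2 ^ n *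
            ∑ ε : Fin n → Bool, |∑ j, R (ε j) * (t j * a i j)| ^ ((4:ℝ)/3)) :=
          Finset.sum_le_sum fun i _ => step1 i
      _ = 3 ^ ((1:ℝ)/3) / 2 ^ n *
            ∑ ε : Fin n → Bool, ∑ i, |∑ j, R (ε j) * (t j * a i j)| ^ ((4:ℝ)/3) := by
          rw [← Finset.mul_sum, Finset.sum_comm]
      _ ≤ 3 ^ ((1:ℝ)/3) / 2 ^ n * ∑ ε : Fin n → Bool, M ^ ((4:ℝ)/3) := by
          apply mul_le_mul_of_nonneg_left _ (by positivity)
          refine Finset.sum_le_sum fun ε _ => ?_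
          have hy := dual n a M hM H (fun j => R (ε j) * t j)
          have hy4 : ∑ j, (R (ε j) * t j) ^ 4 = 1 := by
            rw [← ht4]
            refine Finset.sum_congr rfl fun j _ => ?_
            have : R (ε j) ^ 4 = 1 := by cases ε j <;> simp [R] <;> norm_num
            rw [mul_pow, this, one_mul]
          rw [hy4, Real.one_rpow, mul_one] at hy
          calc ∑ i, |∑ j, R (ε j) * (t j * a i j)| ^ ((4:ℝ)/3)
              = ∑ i, |∑ j, (R (ε j) * t j) * a i j| ^ ((4:ℝ)/3) := by
                refine Finset.sum_congr rfl fun i _ => ?_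
                congr 1
                rw [abs_eq_abs]
                left
                exact Finset.sum_congr rfl fun j _ => by ring
            _ ≤ M ^ ((4:ℝ)/3) := hy
      _ = 3 ^ ((1:ℝ)/3) * M ^ ((4:ℝ)/3) := by
          rw [Finset.sum_const, Finset.card_univ, Fintype.card_fun, Fintype.card_bool,
            Fintype.card_fin, nsmul_eq_mul]
          push_cast
          have h2n : ((2:ℝ)) ^ n ≠ 0 := by positivity
          field_simp
  -- rewrite LHS of main
  have hPr : (0:ℝ) < P ^ ((1:ℝ)/3) := Real.rpow_pos_of_pos hP _
  have lhs_eq : ∀ i, (A i / P ^ ((1:ℝ)/2)) ^ ((2:ℝ)/3)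
      = A i ^ ((2:ℝ)/3) / P ^ ((1:ℝ)/3) := by
    intro i
    rw [Real.div_rpow (hAn i) (Real.rpow_nonneg (le_of_lt hP) _),
      ← Real.rpow_mul (le_of_lt hP)]
    norm_num
  rw [Finset.sum_congr rfl fun i _ => lhs_eq i, ← Finset.sum_div] at main
  rw [div_le_iff₀ hPr] at main
  calc ∑ i, A i ^ ((2:ℝ)/3) ≤ 3 ^ ((1:ℝ)/3) * M ^ ((4:ℝ)/3) * P ^ ((1:ℝ)/3) := main

/-- Jensen step : ∑_j b_ij C_j^{1/3} ≤ D_i^{1/3} A_i^{2/3} -/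
lemma jensen_row (n : ℕ) (b : Fin n → Fin n → ℝ) (hb : ∀ i j, 0 ≤ b i j) (i : Fin n) :
    ∑ j, b i j * (∑ k, b k j) ^ ((1:ℝ)/3)
      ≤ (∑ j, b i j) ^ ((1:ℝ)/3) *
        (∑ j, b i j * (∑ k, b k j) ^ ((1:ℝ)/2)) ^ ((2:ℝ)/3) := by
  set C : Fin n → ℝ := fun j => ∑ k, b k j with hC
  have hCn : ∀ j, 0 ≤ C j := fun j => Finset.sum_nonneg fun k _ => hb k j
  set D := ∑ j, b i j with hD
  have hDn : 0 ≤ D := Finset.sum_nonneg fun j _ => hb i j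
  set A := ∑ j, b i j * C j ^ ((1:ℝ)/2) with hA
  have hAn : 0 ≤ A := Finset.sum_nonneg fun j _ =>
    mul_nonneg (hb i j) (Real.rpow_nonneg (hCn j) _)
  rcases eq_or_lt_of_le hDn with h0 | hDpos
  · -- D = 0 : all b i j = 0
    have hz : ∀ j ∈ Finset.univ, b i j = 0 := fun j _ =>
      le_antisymm (by
        have := Finset.single_le_sum (f := fun j => b i j) (fun j _ => hb i j)
          (Finset.mem_univ j)
        rw [← hD, ← h0] at this; exact this) (hb i j)
    have : ∑ j, b i j * C j ^ ((1:ℝ)/3) = 0 :=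
      Finset.sum_eq_zero fun j hj => by rw [hz j hj, zero_mul]
    rw [this]
    positivity
  -- D > 0
  have jensen := Real.rpow_arith_mean_le_arith_mean_rpow Finset.univ
    (fun j => b i j / D) (fun j => C j ^ ((1:ℝ)/3))
    (fun j _ => div_nonneg (hb i j) hDn)
    (by rw [← Finset.sum_div]; field_simp; exact hD.symm)
    (fun j _ => Real.rpow_nonneg (hCn j) _) (by norm_num : (1:ℝ) ≤ 3/2)
  -- jensen : (∑ (b i j / D) * C_j^{1/3}) ^ (3/2) ≤ ∑ (b i j / D) * (C_j^{1/3})^{3/2}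
  have hz32 : ∀ j, (C j ^ ((1:ℝ)/3)) ^ ((3:ℝ)/2) = C j ^ ((1:ℝ)/2) := by
    intro j
    rw [← Real.rpow_mul (hCn j)]
    norm_num
  set X := ∑ j, b i j / D * C j ^ ((1:ℝ)/3) with hX
  have hXn : 0 ≤ X := Finset.sum_nonneg fun j _ =>
    mul_nonneg (div_nonneg (hb i j) hDn) (Real.rpow_nonneg (hCn j) _)
  have jensen' : X ^ ((3:ℝ)/2) ≤ ∑ j, b i j / D * C j ^ ((1:ℝ)/2) := by
    refine le_trans jensen (le_of_eq ?_)
    refine Finset.sum_congr rfl fun j _ => ?_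
    rw [hz32 j]
  have hXA : X ^ ((3:ℝ)/2) ≤ A / D := by
    calc X ^ ((3:ℝ)/2) ≤ ∑ j, b i j / D * C j ^ ((1:ℝ)/2) := jensen'
      _ = A / D := by
          rw [hA, Finset.sum_div]
          exact Finset.sum_congr rfl fun j _ => by ring
  have hXle : X ≤ (A / D) ^ ((2:ℝ)/3) := by
    calc X = (X ^ ((3:ℝ)/2)) ^ ((2:ℝ)/3) := by
          rw [← Real.rpow_mul hXn]; norm_num
      _ ≤ (A / D) ^ ((2:ℝ)/3) :=
          Real.rpow_le_rpow (Real.rpow_nonneg hXn _) hXA (by norm_num)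
  have key : ∑ j, b i j * C j ^ ((1:ℝ)/3) = D * X := by
    rw [hX, Finset.mul_sum]
    refine Finset.sum_congr rfl fun j _ => ?_
    field_simp
  rw [key]
  calc D * X ≤ D * (A / D) ^ ((2:ℝ)/3) := by
        exact mul_le_mul_of_nonneg_left hXle hDn
    _ = D ^ ((1:ℝ)/3) * A ^ ((2:ℝ)/3) := by
        rw [Real.div_rpow hAn hDn]
        have hsplit : D ^ ((1:ℝ)/3) = D / D ^ ((2:ℝ)/3) := by
          rw [show ((1:ℝ)/3) = 1 - 2/3 by norm_num, Real.rpow_sub hDpos, Real.rpow_one]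
        rw [hsplit]
        ring

/-- combination inequality : P² ≤ (∑_i A_i^{2/3})(∑_j B_j^{2/3}) -/
lemma cw (n : ℕ) (b : Fin n → Fin n → ℝ) (hb : ∀ i j, 0 ≤ b i j) :
    (∑ i, ∑ j, b i j) ^ 2
      ≤ (∑ i, (∑ j, b i j * (∑ k, b k j) ^ ((1:ℝ)/2)) ^ ((2:ℝ)/3))
        * (∑ j, (∑ i, b i j * (∑ k, b i k) ^ ((1:ℝ)/2)) ^ ((2:ℝ)/3)) := by
  set C : Fin n → ℝ := fun j => ∑ k, b k j with hC
  set D : Fin n → ℝ := fun i => ∑ k, b i k with hD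
  have hCn : ∀ j, 0 ≤ C j := fun j => Finset.sum_nonneg fun k _ => hb k j
  have hDn : ∀ i, 0 ≤ D i := fun i => Finset.sum_nonneg fun k _ => hb i k
  set f : Fin n × Fin n → ℝ :=
    fun p => (b p.1 p.2 * C p.2 ^ ((1:ℝ)/3) / D p.1 ^ ((1:ℝ)/3)) ^ ((1:ℝ)/2) with hf
  set g : Fin n × Fin n → ℝ :=
    fun p => (b p.1 p.2 * D p.1 ^ ((1:ℝ)/3) / C p.2 ^ ((1:ℝ)/3)) ^ ((1:ℝ)/2) with hg
  have hXn : ∀ p : Fin n × Fin n, 0 ≤ b p.1 p.2 * C p.2 ^ ((1:ℝ)/3) / D p.1 ^ ((1:ℝ)/3) :=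
    fun p => div_nonneg (mul_nonneg (hb _ _) (Real.rpow_nonneg (hCn _) _))
      (Real.rpow_nonneg (hDn _) _)
  have hYn : ∀ p : Fin n × Fin n, 0 ≤ b p.1 p.2 * D p.1 ^ ((1:ℝ)/3) / C p.2 ^ ((1:ℝ)/3) :=
    fun p => div_nonneg (mul_nonneg (hb _ _) (Real.rpow_nonneg (hDn _) _))
      (Real.rpow_nonneg (hCn _) _)
  have hfg : ∀ p : Fin n × Fin n, f p * g p = b p.1 p.2 := by
    intro p
    rcases eq_or_lt_of_le (hb p.1 p.2) with h0 | hbp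
    · rw [hf, hg]
      simp only
      rw [← h0, zero_mul, zero_div, Real.zero_rpow (by norm_num), zero_mul]
    · have hCp : 0 < C p.2 := lt_of_lt_of_le hbp
        (Finset.single_le_sum (f := fun k => b k p.2) (fun k _ => hb k p.2)
          (Finset.mem_univ p.1))
      have hDp : 0 < D p.1 := lt_of_lt_of_le hbp
        (Finset.single_le_sum (f := fun k => b p.1 k) (fun k _ => hb p.1 k)
          (Finset.mem_univ p.2))
      have hC3 : (0:ℝ) < C p.2 ^ ((1:ℝ)/3) := Real.rpow_pos_of_pos hCp _
      have hD3 : (0:ℝ) < D p.1 ^ ((1:ℝ)/3) := Real.rpow_pos_of_pos hDp _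
      rw [hf, hg]
      simp only
      rw [← Real.mul_rpow (hXn p) (hYn p)]
      have hinner : b p.1 p.2 * C p.2 ^ ((1:ℝ)/3) / D p.1 ^ ((1:ℝ)/3) *
          (b p.1 p.2 * D p.1 ^ ((1:ℝ)/3) / C p.2 ^ ((1:ℝ)/3)) = b p.1 p.2 ^ 2 := by
        field_simp
      rw [hinner, ← Real.rpow_natCast (b p.1 p.2) 2, ← Real.rpow_mul (hb p.1 p.2)]
      norm_num
  have hf2 : ∀ p : Fin n × Fin n,
      f p ^ 2 = b p.1 p.2 * C p.2 ^ ((1:ℝ)/3) / D p.1 ^ ((1:ℝ)/3) := by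
    intro p
    rw [hf]
    simp only
    rw [← Real.rpow_natCast ((b p.1 p.2 * C p.2 ^ ((1:ℝ)/3) / D p.1 ^ ((1:ℝ)/3)) ^ ((1:ℝ)/2)) 2,
      ← Real.rpow_mul (hXn p)]
    norm_num
  have hg2 : ∀ p : Fin n × Fin n,
      g p ^ 2 = b p.1 p.2 * D p.1 ^ ((1:ℝ)/3) / C p.2 ^ ((1:ℝ)/3) := by
    intro p
    rw [hg]
    simp only
    rw [← Real.rpow_natCast ((b p.1 p.2 * D p.1 ^ ((1:ℝ)/3) / C p.2 ^ ((1:ℝ)/3)) ^ ((1:ℝ)/2)) 2,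
      ← Real.rpow_mul (hYn p)]
    norm_num
  have cs := Finset.sum_mul_sq_le_sq_mul_sq Finset.univ f g
  have hsum_fg : ∑ p : Fin n × Fin n, f p * g p = ∑ i, ∑ j, b i j := by
    rw [Finset.sum_congr rfl fun p _ => hfg p, Fintype.sum_prod_type]
  -- bound ∑ f²
  have hFbound : ∑ p : Fin n × Fin n, f p ^ 2
      ≤ ∑ i, (∑ j, b i j * C j ^ ((1:ℝ)/2)) ^ ((2:ℝ)/3) := by
    rw [Finset.sum_congr rfl fun p _ => hf2 p, Fintype.sum_prod_type]
    dsimp only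
    refine Finset.sum_le_sum fun i _ => ?_
    have hAn : (0:ℝ) ≤ ∑ j, b i j * C j ^ ((1:ℝ)/2) :=
      Finset.sum_nonneg fun j _ => mul_nonneg (hb i j) (Real.rpow_nonneg (hCn j) _)
    rcases eq_or_lt_of_le (hDn i) with h0 | hDpos
    · have hz : ∀ j, b i j = 0 := by
        intro j
        refine le_antisymm ?_ (hb i j)
        have := Finset.single_le_sum (f := fun k => b i k) (fun k _ => hb i k)
          (Finset.mem_univ j)
        rw [show D i = ∑ k, b i k from rfl] at h0
        rw [← h0] at this
        exact this
      have : ∑ j, b i j * C j ^ ((1:ℝ)/3) / D i ^ ((1:ℝ)/3) = 0 :=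
        Finset.sum_eq_zero fun j _ => by rw [hz j, zero_mul, zero_div]
      rw [this]
      positivity
    · have hD3 : (0:ℝ) < D i ^ ((1:ℝ)/3) := Real.rpow_pos_of_pos hDpos _
      rw [← Finset.sum_div]
      rw [div_le_iff₀ hD3]
      calc ∑ j, b i j * C j ^ ((1:ℝ)/3)
          ≤ D i ^ ((1:ℝ)/3) * (∑ j, b i j * C j ^ ((1:ℝ)/2)) ^ ((2:ℝ)/3) :=
            jensen_row n b hb i
        _ = (∑ j, b i j * C j ^ ((1:ℝ)/2)) ^ ((2:ℝ)/3) * D i ^ ((1:ℝ)/3) := by ring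
  -- bound ∑ g² (transpose)
  have hGbound : ∑ p : Fin n × Fin n, g p ^ 2
      ≤ ∑ j, (∑ i, b i j * D i ^ ((1:ℝ)/2)) ^ ((2:ℝ)/3) := by
    rw [Finset.sum_congr rfl fun p _ => hg2 p, Fintype.sum_prod_type]
    dsimp only
    rw [Finset.sum_comm]
    refine Finset.sum_le_sum fun j _ => ?_
    have hjr := jensen_row n (fun u v => b v u) (fun u v => hb v u) j
    rcases eq_or_lt_of_le (hCn j) with h0 | hCpos
    · have hz : ∀ i, b i j = 0 := by
        intro i
        refine le_antisymm ?_ (hb i j)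
        have := Finset.single_le_sum (f := fun k => b k j) (fun k _ => hb k j)
          (Finset.mem_univ i)
        rw [show C j = ∑ k, b k j from rfl] at h0
        rw [← h0] at this
        exact this
      have : ∑ i, b i j * D i ^ ((1:ℝ)/3) / C j ^ ((1:ℝ)/3) = 0 :=
        Finset.sum_eq_zero fun i _ => by rw [hz i, zero_mul, zero_div]
      rw [this]
      exact Real.rpow_nonneg (Finset.sum_nonneg fun i _ =>
        mul_nonneg (hb i j) (Real.rpow_nonneg (hDn i) _)) _
    · have hC3 : (0:ℝ) < C j ^ ((1:ℝ)/3) := Real.rpow_pos_of_pos hCpos _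
      rw [← Finset.sum_div]
      rw [div_le_iff₀ hC3]
      calc ∑ i, b i j * D i ^ ((1:ℝ)/3)
          ≤ C j ^ ((1:ℝ)/3) * (∑ i, b i j * D i ^ ((1:ℝ)/2)) ^ ((2:ℝ)/3) := hjr
        _ = (∑ i, b i j * D i ^ ((1:ℝ)/2)) ^ ((2:ℝ)/3) * C j ^ ((1:ℝ)/3) := by ring
  -- final
  rw [hsum_fg] at cs
  refine le_trans cs ?_
  have h1 : (0:ℝ) ≤ ∑ p : Fin n × Fin n, g p ^ 2 :=
    Finset.sum_nonneg fun p _ => sq_nonneg _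
  have h2 : (0:ℝ) ≤ ∑ i, (∑ j, b i j * C j ^ ((1:ℝ)/2)) ^ ((2:ℝ)/3) :=
    Finset.sum_nonneg fun i _ => Real.rpow_nonneg (Finset.sum_nonneg fun j _ =>
      mul_nonneg (hb i j) (Real.rpow_nonneg (hCn j) _)) _
  exact mul_le_mul hFbound hGbound h1 h2

theorem core (n : ℕ) (a : Fin n → Fin n → ℝ) (M : ℝ) (hM : 0 ≤ M)
    (H : ∀ x y : Fin n → ℝ, |∑ i, ∑ j, x i * y j * a i j|
        ≤ M * (∑ i, x i ^ 4) ^ ((1:ℝ)/4) * (∑ j, y j ^ 4) ^ ((1:ℝ)/4)) :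
    ∑ i, ∑ j, a i j ^ 2 ≤ Real.sqrt 3 * M ^ 2 := by
  set P := ∑ i, ∑ j, a i j ^ 2 with hP
  have hPn : 0 ≤ P :=
    Finset.sum_nonneg fun i _ => Finset.sum_nonneg fun j _ => sq_nonneg _
  rcases eq_or_lt_of_le hPn with h0 | hPpos
  · rw [← h0]; positivity
  -- transpose hypothesis
  have H' : ∀ x y : Fin n → ℝ, |∑ i, ∑ j, x i * y j * a j i|
      ≤ M * (∑ i, x i ^ 4) ^ ((1:ℝ)/4) * (∑ j, y j ^ 4) ^ ((1:ℝ)/4) := by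
    intro x y
    have e : ∑ i, ∑ j, x i * y j * a j i = ∑ i, ∑ j, y i * x j * a i j := by
      rw [Finset.sum_comm]
      exact Finset.sum_congr rfl fun i _ => Finset.sum_congr rfl fun j _ => by ring
    rw [e]
    calc |∑ i, ∑ j, y i * x j * a i j|
        ≤ M * (∑ i, y i ^ 4) ^ ((1:ℝ)/4) * (∑ j, x j ^ 4) ^ ((1:ℝ)/4) := H y x
      _ = M * (∑ i, x i ^ 4) ^ ((1:ℝ)/4) * (∑ j, y j ^ 4) ^ ((1:ℝ)/4) := by ring
  have hP' : 0 < ∑ i, ∑ j, a j i ^ 2 := by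
    rw [Finset.sum_comm]; exact hPpos
  have hU := rowbound n a M hM H hPpos
  have hV0 := rowbound n (fun i j => a j i) M hM H' hP'
  have hVP : (∑ i, ∑ j, a j i ^ 2) = P := by rw [hP, Finset.sum_comm]
  rw [hVP] at hV0
  -- cw with b = a²
  have hcw := cw n (fun i j => a i j ^ 2) (fun i j => sq_nonneg _)
  set U := ∑ i, (∑ j, a i j ^ 2 * (∑ k, a k j ^ 2) ^ ((1:ℝ)/2)) ^ ((2:ℝ)/3) with hUdef
  set V := ∑ j, (∑ i, a i j ^ 2 * (∑ k, a i k ^ 2) ^ ((1:ℝ)/2)) ^ ((2:ℝ)/3) with hVdef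
  have hUn : 0 ≤ U := Finset.sum_nonneg fun i _ => Real.rpow_nonneg
    (Finset.sum_nonneg fun j _ => mul_nonneg (sq_nonneg _)
      (Real.rpow_nonneg (Finset.sum_nonneg fun k _ => sq_nonneg _) _)) _
  have hVbound : V ≤ 3 ^ ((1:ℝ)/3) * M ^ ((4:ℝ)/3) * P ^ ((1:ℝ)/3) := by
    rw [hVdef]
    calc ∑ j, (∑ i, a i j ^ 2 * (∑ k, a i k ^ 2) ^ ((1:ℝ)/2)) ^ ((2:ℝ)/3)
        = ∑ i, (∑ j, a j i ^ 2 * (∑ k, a j k ^ 2) ^ ((1:ℝ)/2)) ^ ((2:ℝ)/3) := rfl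
      _ ≤ 3 ^ ((1:ℝ)/3) * M ^ ((4:ℝ)/3) * P ^ ((1:ℝ)/3) := hV0
  have hKn : (0:ℝ) ≤ 3 ^ ((1:ℝ)/3) * M ^ ((4:ℝ)/3) * P ^ ((1:ℝ)/3) := by positivity
  have hVn : 0 ≤ V := Finset.sum_nonneg fun j _ => Real.rpow_nonneg
    (Finset.sum_nonneg fun i _ => mul_nonneg (sq_nonneg _)
      (Real.rpow_nonneg (Finset.sum_nonneg fun k _ => sq_nonneg _) _)) _
  have chain : P ^ 2 ≤ (3 ^ ((1:ℝ)/3) * M ^ ((4:ℝ)/3) * P ^ ((1:ℝ)/3)) ^ 2 := by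
    calc P ^ 2 ≤ U * V := hcw
      _ ≤ (3 ^ ((1:ℝ)/3) * M ^ ((4:ℝ)/3) * P ^ ((1:ℝ)/3)) *
            (3 ^ ((1:ℝ)/3) * M ^ ((4:ℝ)/3) * P ^ ((1:ℝ)/3)) :=
          mul_le_mul hU hVbound hVn hKn
      _ = (3 ^ ((1:ℝ)/3) * M ^ ((4:ℝ)/3) * P ^ ((1:ℝ)/3)) ^ 2 := by ring
  -- extract : P^{4/3} ≤ 3^{2/3} M^{8/3}
  have hP23 : (0:ℝ) < P ^ ((2:ℝ)/3) := Real.rpow_pos_of_pos hPpos _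
  have key : P ^ ((4:ℝ)/3) ≤ 3 ^ ((2:ℝ)/3) * M ^ ((8:ℝ)/3) := by
    have e1 : P ^ 2 = P ^ ((4:ℝ)/3) * P ^ ((2:ℝ)/3) := by
      rw [← Real.rpow_add hPpos,
        show (4:ℝ)/3 + 2/3 = ((2:ℕ):ℝ) by norm_num, Real.rpow_natCast]
    have e2 : (3 ^ ((1:ℝ)/3) * M ^ ((4:ℝ)/3) * P ^ ((1:ℝ)/3)) ^ 2
        = (3 ^ ((2:ℝ)/3) * M ^ ((8:ℝ)/3)) * P ^ ((2:ℝ)/3) := by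
      have a1 : (3:ℝ) ^ ((1:ℝ)/3) * 3 ^ ((1:ℝ)/3) = 3 ^ ((2:ℝ)/3) := by
        rw [← Real.rpow_add (by norm_num : (0:ℝ) < 3)]; norm_num
      have a2 : M ^ ((4:ℝ)/3) * M ^ ((4:ℝ)/3) = M ^ ((8:ℝ)/3) := by
        rw [← Real.rpow_add' hM (by norm_num)]; norm_num
      have a3 : P ^ ((1:ℝ)/3) * P ^ ((1:ℝ)/3) = P ^ ((2:ℝ)/3) := by
        rw [← Real.rpow_add hPpos]
        norm_num
      calc (3 ^ ((1:ℝ)/3) * M ^ ((4:ℝ)/3) * P ^ ((1:ℝ)/3)) ^ 2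
          = (3 ^ ((1:ℝ)/3) * 3 ^ ((1:ℝ)/3)) * (M ^ ((4:ℝ)/3) * M ^ ((4:ℝ)/3))
            * (P ^ ((1:ℝ)/3) * P ^ ((1:ℝ)/3)) := by ring
        _ = (3 ^ ((2:ℝ)/3) * M ^ ((8:ℝ)/3)) * P ^ ((2:ℝ)/3) := by
            rw [a1, a2, a3]
    rw [e1, e2] at chain
    exact le_of_mul_le_mul_right chain hP23
  -- conclude : P ≤ √3 M²
  have final : P ≤ (3 ^ ((2:ℝ)/3) * M ^ ((8:ℝ)/3)) ^ ((3:ℝ)/4) := by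
    have := Real.rpow_le_rpow (Real.rpow_nonneg hPn _) key (by norm_num : (0:ℝ) ≤ 3/4)
    rw [← Real.rpow_mul hPn] at this
    norm_num at this
    exact this
  have hfin : (3 ^ ((2:ℝ)/3) * M ^ ((8:ℝ)/3)) ^ ((3:ℝ)/4) = Real.sqrt 3 * M ^ 2 := by
    have b1 : ((3:ℝ) ^ ((2:ℝ)/3)) ^ ((3:ℝ)/4) = Real.sqrt 3 := by
      rw [← Real.rpow_mul (by norm_num : (0:ℝ) ≤ 3), Real.sqrt_eq_rpow]
      norm_num
    have b2 : (M ^ ((8:ℝ)/3)) ^ ((3:ℝ)/4) = M ^ 2 := by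
      rw [← Real.rpow_mul hM,
        show (8:ℝ)/3 * (3/4) = ((2:ℕ):ℝ) by norm_num, Real.rpow_natCast]
    rw [Real.mul_rpow (by positivity) (Real.rpow_nonneg hM _), b1, b2]
  rw [hfin] at final
  exact final

end HL4

/-- Classical bilinear Hardy–Littlewood inequality at the endpoint `p = 4`. -/
theorem bilinear_hardy_littlewood_p_four [Fact (1 ≤ (4 : ℝ≥0∞))] (n : ℕ)
    (T : PiLp 4 (fun _ : Fin n => ℝ) →L[ℝ] PiLp 4 (fun _ : Fin n => ℝ) →L[ℝ] ℝ) :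
    (∑ i : Fin n, ∑ j : Fin n,
        |T ((WithLp.equiv 4 (Fin n → ℝ)).symm (Pi.single i 1))
           ((WithLp.equiv 4 (Fin n → ℝ)).symm (Pi.single j 1))| ^ (2 : ℝ)) ^ ((1 : ℝ) / 2)
      ≤ Real.sqrt 2 * ‖T‖ := by
  classical
  set e : Fin n → PiLp 4 (fun _ : Fin n => ℝ) :=
    fun i => (WithLp.equiv 4 (Fin n → ℝ)).symm (Pi.single i 1) with he
  set a : Fin n → Fin n → ℝ := fun i j => T (e i) (e j) with ha
  -- norm of an embedded vector
  have hnorm : ∀ x : Fin n → ℝ,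
      ‖(WithLp.equiv 4 (Fin n → ℝ)).symm x‖ = (∑ i, x i ^ 4) ^ ((1:ℝ)/4) := by
    intro x
    rw [PiLp.norm_eq_sum (by norm_num : 0 < (4 : ℝ≥0∞).toReal)]
    have h4 : (4 : ℝ≥0∞).toReal = (4:ℝ) := by norm_num
    rw [h4]
    congr 1
    · refine Finset.sum_congr rfl fun i _ => ?_
      rw [WithLp.equiv_symm_apply, PiLp.toLp_apply, Real.norm_eq_abs,
        show ((4:ℝ) = ((4:ℕ):ℝ)) by norm_num, Real.rpow_natCast, pow_abs,
        abs_of_nonneg (by positivity : (0:ℝ) ≤ x i ^ 4)]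
  -- decomposition of an embedded vector in terms of e
  have hdecomp : ∀ x : Fin n → ℝ,
      (WithLp.equiv 4 (Fin n → ℝ)).symm x = ∑ i, x i • e i := by
    intro x
    have h1 : x = ∑ i, Pi.single i (x i) := (Finset.univ_sum_single x).symm
    calc (WithLp.equiv 4 (Fin n → ℝ)).symm x
        = (WithLp.linearEquiv 4 ℝ (Fin n → ℝ)).symm x := rfl
      _ = (WithLp.linearEquiv 4 ℝ (Fin n → ℝ)).symm (∑ i, Pi.single i (x i)) := by rw [← h1]
      _ = ∑ i, (WithLp.linearEquiv 4 ℝ (Fin n → ℝ)).symm (Pi.single i (x i)) :=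
          map_sum (WithLp.linearEquiv 4 ℝ (Fin n → ℝ)).symm _ Finset.univ
      _ = ∑ i, x i • e i := by
          refine Finset.sum_congr rfl fun i _ => ?_
          have h2 : Pi.single i (x i) = x i • (Pi.single i 1 : Fin n → ℝ) := by
            rw [← Pi.single_smul, smul_eq_mul, mul_one]
          rw [h2, map_smul (WithLp.linearEquiv 4 ℝ (Fin n → ℝ)).symm]
          rfl
  -- bilinear expansion
  have hbil : ∀ x y : Fin n → ℝ,
      T ((WithLp.equiv 4 (Fin n → ℝ)).symm x) ((WithLp.equiv 4 (Fin n → ℝ)).symm y)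
        = ∑ i, ∑ j, x i * y j * a i j := by
    intro x y
    rw [hdecomp x, hdecomp y, map_sum T _ Finset.univ]
    rw [ContinuousLinearMap.sum_apply]
    refine Finset.sum_congr rfl fun i _ => ?_
    rw [map_smul T, ContinuousLinearMap.smul_apply, map_sum (T (e i)) _ Finset.univ]
    rw [Finset.smul_sum]
    refine Finset.sum_congr rfl fun j _ => ?_
    rw [map_smul (T (e i))]
    simp only [smul_eq_mul, ha]
    ring
  -- hypothesis for core
  have H : ∀ x y : Fin n → ℝ, |∑ i, ∑ j, x i * y j * a i j|
      ≤ ‖T‖ * (∑ i, x i ^ 4) ^ ((1:ℝ)/4) * (∑ j, y j ^ 4) ^ ((1:ℝ)/4) := by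
    intro x y
    rw [← hbil x y]
    calc |T ((WithLp.equiv 4 (Fin n → ℝ)).symm x) ((WithLp.equiv 4 (Fin n → ℝ)).symm y)|
        ≤ ‖T‖ * ‖(WithLp.equiv 4 (Fin n → ℝ)).symm x‖ *
            ‖(WithLp.equiv 4 (Fin n → ℝ)).symm y‖ :=
          T.le_opNorm₂ _ _
      _ = ‖T‖ * (∑ i, x i ^ 4) ^ ((1:ℝ)/4) * (∑ j, y j ^ 4) ^ ((1:ℝ)/4) := by
          rw [hnorm x, hnorm y]
  have hcore := HL4.core n a ‖T‖ (norm_nonneg T) H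
  -- convert goal
  have hgoal_eq : ∑ i : Fin n, ∑ j : Fin n,
      |T (e i) (e j)| ^ (2:ℝ) = ∑ i, ∑ j, a i j ^ 2 := by
    refine Finset.sum_congr rfl fun i _ => Finset.sum_congr rfl fun j _ => ?_
    rw [show ((2:ℝ) = ((2:ℕ):ℝ)) by norm_num, Real.rpow_natCast, sq_abs, ha]
  rw [hgoal_eq]
  have h32 : Real.sqrt 3 * ‖T‖ ^ 2 ≤ 2 * ‖T‖ ^ 2 := by
    have : Real.sqrt 3 ≤ 2 := by
      rw [show (2:ℝ) = Real.sqrt 4 by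
        rw [show (4:ℝ) = 2 ^ 2 by norm_num, Real.sqrt_sq (by norm_num : (0:ℝ) ≤ 2)]]
      exact Real.sqrt_le_sqrt (by norm_num)
    nlinarith [sq_nonneg ‖T‖]
  have hPn : (0:ℝ) ≤ ∑ i, ∑ j, a i j ^ 2 :=
    Finset.sum_nonneg fun i _ => Finset.sum_nonneg fun j _ => sq_nonneg _
  calc (∑ i, ∑ j, a i j ^ 2) ^ ((1:ℝ)/2)
      ≤ (2 * ‖T‖ ^ 2) ^ ((1:ℝ)/2) :=
        Real.rpow_le_rpow hPn (le_trans hcore h32) (by norm_num)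
    _ = Real.sqrt 2 * ‖T‖ := by
        rw [← Real.sqrt_eq_rpow, Real.sqrt_mul (by norm_num : (0:ℝ) ≤ 2),
          Real.sqrt_sq (norm_nonneg T)]
end

section
/- Littlewood's 4/3 inequality: for every bilinear form T : ℓ_∞^n × ℓ_∞^n → ℝ, (∑_{j,k=1}^n |T(e_j,e_k)|^{4/3})^{3/4} ≤ √2 · ‖T‖. -/
open Finset

namespace LW

def rs (b : Bool) : ℝ := if b then 1 else -1

lemma rs_abs (b : Bool) : |rs b| = 1 := by cases b <;> simp [rs]
lemma rs_sq (b : Bool) : rs b * rs b = 1 := by cases b <;> norm_num [rs]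
lemma rs_beq (a b : Bool) : rs (a == b) = rs a * rs b := by
  cases a <;> cases b <;> norm_num [rs]
lemma rs_not (b : Bool) : rs (!b) = - rs b := by cases b <;> norm_num [rs]

variable {n : ℕ}

lemma sum_pi_bool (g : Fin n → Bool → ℝ) :
    ∑ η : Fin n → Bool, ∏ j, g j (η j) = ∏ j, (g j true + g j false) := by
  rw [← Fintype.prod_sum]
  congr 1; ext j; exact Fintype.sum_bool _

/-- the xnor group operation -/
def bop (ε η : Fin n → Bool) : Fin n → Bool := fun i => ε i == η i

lemma bop_bop (ε η : Fin n → Bool) : bop ε (bop ε η) = η := by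
  funext i; unfold bop; cases ε i <;> cases η i <;> rfl

lemma bop_ones (ε : Fin n → Bool) : bop ε (fun _ => true) = ε := by
  funext i; unfold bop; cases ε i <;> rfl

noncomputable def w (ρ : ℝ) (η : Fin n → Bool) : ℝ := ∏ j, (1 + ρ * rs (η j)) / 2

lemma w_nonneg {ρ : ℝ} (h0 : 0 ≤ ρ) (h1 : ρ ≤ 1) (η : Fin n → Bool) : 0 ≤ w ρ η := by
  apply Finset.prod_nonneg
  intro j _
  have := rs_abs (η j)
  have h2 : -1 ≤ rs (η j) := by cases (η j) <;> norm_num [rs]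
  nlinarith

lemma w_sum (ρ : ℝ) : ∑ η : Fin n → Bool, w ρ η = 1 := by
  unfold w
  rw [sum_pi_bool (fun j b => (1 + ρ * rs b) / 2)]
  norm_num [rs]
  rw [show (1+ρ)/2 + (1+-ρ)/2 = (1:ℝ) by ring, one_pow]


lemma w_marg (ρ : ℝ) (i : Fin n) : ∑ η : Fin n → Bool, w ρ η * rs (η i) = ρ := by
  have hrw : ∀ η : Fin n → Bool, w ρ η * rs (η i)
      = ∏ j, ((1 + ρ * rs (η j)) / 2 * (if j = i then rs (η j) else 1)) := by
    intro η
    rw [Finset.prod_mul_distrib]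
    unfold w
    congr 1
    rw [Finset.prod_ite_eq' Finset.univ i (fun j => rs (η j))]
    simp
  simp_rw [hrw]
  rw [sum_pi_bool (fun j b => (1 + ρ * rs b) / 2 * (if j = i then rs b else 1))]
  rw [Finset.prod_eq_single i]
  · simp [rs]; ring
  · intro j _ hj
    simp [hj, rs]; ring
  · intro h; exact absurd (Finset.mem_univ i) h

noncomputable def chi (A : Finset (Fin n)) (ε : Fin n → Bool) : ℝ := ∏ i ∈ A, rs (ε i)

lemma chi_mul (A : Finset (Fin n)) (ε δ : Fin n → Bool) :
    chi A ε * chi A δ = chi A (bop ε δ) := by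
  unfold chi bop
  rw [← Finset.prod_mul_distrib]
  exact Finset.prod_congr rfl (fun i _ => (rs_beq (ε i) (δ i)).symm)

lemma w_expand (ρ : ℝ) (η : Fin n → Bool) :
    (2:ℝ)^n * w ρ η = ∑ A : Finset (Fin n), ρ ^ A.card * chi A η := by
  have h1 : (2:ℝ)^n * w ρ η = ∏ j, (ρ * rs (η j) + 1) := by
    unfold w
    rw [show ((2:ℝ)^n) = ∏ _j : Fin n, (2:ℝ) by simp [Finset.prod_const, Finset.card_univ]]
    rw [← Finset.prod_mul_distrib]
    exact Finset.prod_congr rfl (fun j _ => by ring)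
  rw [h1, Fintype.prod_add]
  apply Finset.sum_congr rfl
  intro A _
  rw [Finset.prod_const_one, mul_one, Finset.prod_mul_distrib, Finset.prod_const]
  unfold chi; ring

lemma w_one (η : Fin n → Bool) : w 1 η = if η = (fun _ => true) then 1 else 0 := by
  unfold w
  by_cases h : η = (fun _ => true)
  · subst h; simp [rs]
  · rw [if_neg h]
    have : ∃ i, η i = false := by
      by_contra hc
      push_neg at hc
      exact h (funext fun i => by simpa using hc i)
    obtain ⟨i, hi⟩ := this
    apply Finset.prod_eq_zero (Finset.mem_univ i)
    rw [hi]; norm_num [rs]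


section SzarekSec
variable (v : Fin n → ℝ)

noncomputable def Sv (ε : Fin n → Bool) : ℝ := ∑ i, v i * rs (ε i)

lemma Sv_bop (ε η : Fin n → Bool) :
    Sv v (bop ε η) = ∑ i, (v i * rs (ε i)) * rs (η i) := by
  unfold Sv bop
  exact Finset.sum_congr rfl (fun i _ => by rw [rs_beq]; ring)

lemma Sv_neg (ε : Fin n → Bool) : Sv v (fun i => !ε i) = - Sv v ε := by
  unfold Sv
  rw [← Finset.sum_neg_distrib]
  exact Finset.sum_congr rfl (fun i _ => by rw [rs_not]; ring)

lemma marg_S (ρ : ℝ) (ε : Fin n → Bool) :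
    ∑ η : Fin n → Bool, w ρ η * Sv v (bop ε η) = ρ * Sv v ε := by
  have : ∀ η : Fin n → Bool, w ρ η * Sv v (bop ε η)
      = ∑ i, (v i * rs (ε i)) * (w ρ η * rs (η i)) := by
    intro η
    rw [Sv_bop, Finset.mul_sum]
    exact Finset.sum_congr rfl (fun i _ => by ring)
  simp_rw [this]
  rw [Finset.sum_comm]
  have : ∀ i : Fin n, ∑ η : Fin n → Bool, (v i * rs (ε i)) * (w ρ η * rs (η i))
      = (v i * rs (ε i)) * ρ := by
    intro i
    rw [← Finset.mul_sum, w_marg]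
  simp_rw [this]
  unfold Sv
  rw [← Finset.sum_mul]
  ring

noncomputable def coeffA (A : Finset (Fin n)) : ℝ := ∑ ε : Fin n → Bool, |Sv v ε| * chi A ε

lemma coeff_empty : coeffA v (∅ : Finset (Fin n)) = ∑ ε : Fin n → Bool, |Sv v ε| := by
  unfold coeffA chi
  simp

lemma coeff_singleton (i : Fin n) : coeffA v {i} = 0 := by
  have hneg : ∀ ε : Fin n → Bool,
      |Sv v (fun k => !ε k)| * chi {i} (fun k => !ε k) = -(|Sv v ε| * chi {i} ε) := by
    intro ε
    rw [Sv_neg, abs_neg]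
    unfold chi
    simp [rs_not]
  have key : coeffA v {i} = - coeffA v {i} := by
    conv_lhs => rw [coeffA,
      ← Fintype.sum_bijective (fun ε : Fin n → Bool => fun k => !ε k)
        (Function.Involutive.bijective (fun ε => by funext k; simp))
        (fun ε => |Sv v (fun k => !ε k)| * chi {i} (fun k => !ε k))
        (fun ε => |Sv v ε| * chi {i} ε) (fun ε => rfl)]
    rw [show (∑ ε : Fin n → Bool, |Sv v (fun k => !ε k)| * chi {i} (fun k => !ε k))
        = ∑ ε : Fin n → Bool, -(|Sv v ε| * chi {i} ε) from
      Finset.sum_congr rfl (fun ε _ => hneg ε)]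
    rw [Finset.sum_neg_distrib, coeffA]
  linarith

/-- the key Fourier identity -/
lemma key_identity (ρ : ℝ) :
    (2:ℝ)^n * ∑ ε : Fin n → Bool, |Sv v ε| * ∑ η : Fin n → Bool, w ρ η * |Sv v (bop ε η)|
      = ∑ A : Finset (Fin n), ρ ^ A.card * (coeffA v A)^2 := by
  -- reindex η ↦ δ = bop ε η
  have h1 : ∀ ε : Fin n → Bool, ∑ η : Fin n → Bool, w ρ η * |Sv v (bop ε η)|
      = ∑ δ : Fin n → Bool, w ρ (bop ε δ) * |Sv v δ| := by
    intro ε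
    rw [← Fintype.sum_bijective (bop ε) (Function.Involutive.bijective (bop_bop ε)) _ _
      (fun η => rfl)]
    apply Finset.sum_congr rfl
    intro η _
    rw [bop_bop]
  simp_rw [h1]
  have h2 : ∀ ε δ : Fin n → Bool, (2:ℝ)^n * w ρ (bop ε δ)
      = ∑ A : Finset (Fin n), ρ ^ A.card * (chi A ε * chi A δ) := by
    intro ε δ
    rw [w_expand]
    exact Finset.sum_congr rfl (fun A _ => by rw [chi_mul])
  calc (2:ℝ)^n * ∑ ε : Fin n → Bool, |Sv v ε| * ∑ δ : Fin n → Bool, w ρ (bop ε δ) * |Sv v δ|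
      = ∑ ε : Fin n → Bool, ∑ δ : Fin n → Bool,
          ((2:ℝ)^n * w ρ (bop ε δ)) * (|Sv v ε| * |Sv v δ|) := by
        rw [Finset.mul_sum]
        apply Finset.sum_congr rfl
        intro ε _
        rw [Finset.mul_sum, Finset.mul_sum]
        exact Finset.sum_congr rfl (fun δ _ => by ring)
    _ = ∑ ε : Fin n → Bool, ∑ δ : Fin n → Bool, ∑ A : Finset (Fin n),
          ρ ^ A.card * ((|Sv v ε| * chi A ε) * (|Sv v δ| * chi A δ)) := by
        apply Finset.sum_congr rfl; intro ε _
        apply Finset.sum_congr rfl; intro δ _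
        rw [h2, Finset.sum_mul]
        exact Finset.sum_congr rfl (fun A _ => by ring)
    _ = ∑ A : Finset (Fin n), ∑ ε : Fin n → Bool, ∑ δ : Fin n → Bool,
          ρ ^ A.card * ((|Sv v ε| * chi A ε) * (|Sv v δ| * chi A δ)) := by
        have hin : ∀ ε : Fin n → Bool, ∑ δ : Fin n → Bool, ∑ A : Finset (Fin n),
            ρ ^ A.card * ((|Sv v ε| * chi A ε) * (|Sv v δ| * chi A δ))
            = ∑ A : Finset (Fin n), ∑ δ : Fin n → Bool,
            ρ ^ A.card * ((|Sv v ε| * chi A ε) * (|Sv v δ| * chi A δ)) :=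
          fun ε => Finset.sum_comm
        simp_rw [hin]
        exact Finset.sum_comm
    _ = ∑ A : Finset (Fin n), ρ ^ A.card * (coeffA v A)^2 := by
        apply Finset.sum_congr rfl
        intro A _
        rw [show (coeffA v A)^2 = (coeffA v A) * (coeffA v A) from sq (coeffA v A) ▸ rfl]
        unfold coeffA
        rw [Finset.sum_mul_sum, Finset.mul_sum]
        apply Finset.sum_congr rfl
        intro ε _
        rw [Finset.mul_sum]


lemma parseval : ∑ A : Finset (Fin n), (coeffA v A)^2
    = (2:ℝ)^n * ∑ ε : Fin n → Bool, (Sv v ε)^2 := by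
  have h := key_identity v 1
  have hinner : ∀ ε : Fin n → Bool,
      ∑ η : Fin n → Bool, w 1 η * |Sv v (bop ε η)| = |Sv v ε| := by
    intro ε
    have : ∀ η : Fin n → Bool, w 1 η * |Sv v (bop ε η)|
        = if η = (fun _ => true) then |Sv v (bop ε η)| else 0 := by
      intro η
      rw [w_one]
      by_cases hh : η = (fun _ => true) <;> simp [hh]
    simp_rw [this]
    rw [Finset.sum_ite_eq' Finset.univ (fun _ => true) (fun η => |Sv v (bop ε η)|)]
    simp [bop_ones]
  simp_rw [hinner, one_pow] at h
  rw [show (∑ A : Finset (Fin n), coeffA v A ^ 2)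
      = ∑ A : Finset (Fin n), 1 * coeffA v A ^ 2 from
    Finset.sum_congr rfl (fun A _ => by rw [one_mul]), ← h]
  apply congrArg
  apply Finset.sum_congr rfl
  intro ε _
  rw [sq, abs_mul_abs_self]

lemma orth {i j : Fin n} (hij : i ≠ j) :
    ∑ ε : Fin n → Bool, rs (ε i) * rs (ε j) = 0 := by
  have hneg : ∀ ε : Fin n → Bool,
      rs (Function.update ε i (!ε i) i) * rs (Function.update ε i (!ε i) j)
        = -(rs (ε i) * rs (ε j)) := by
    intro ε
    rw [Function.update_self, Function.update_of_ne (Ne.symm hij), rs_not]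
    ring
  have hinv : Function.Involutive (fun ε : Fin n → Bool => Function.update ε i (!ε i)) := by
    intro ε
    funext k
    by_cases hk : k = i
    · subst hk; simp
    · simp [Function.update_of_ne hk]
  have key : (∑ ε : Fin n → Bool, rs (ε i) * rs (ε j))
      = - ∑ ε : Fin n → Bool, rs (ε i) * rs (ε j) := by
    conv_lhs => rw [← Fintype.sum_bijective (fun ε : Fin n → Bool => Function.update ε i (!ε i))
        hinv.bijective
        (fun ε => rs (Function.update ε i (!ε i) i) * rs (Function.update ε i (!ε i) j))
        (fun ε => rs (ε i) * rs (ε j)) (fun ε => rfl)]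
    rw [show (∑ ε : Fin n → Bool,
          rs (Function.update ε i (!ε i) i) * rs (Function.update ε i (!ε i) j))
        = ∑ ε : Fin n → Bool, -(rs (ε i) * rs (ε j)) from
      Finset.sum_congr rfl (fun ε _ => hneg ε)]
    rw [Finset.sum_neg_distrib]
  linarith

lemma card_cube : ∑ _ε : Fin n → Bool, (1:ℝ) = (2:ℝ)^n := by
  rw [Finset.sum_const, Finset.card_univ]
  simp [Fintype.card_fun]

lemma Q_eq : ∑ ε : Fin n → Bool, (Sv v ε)^2 = (2:ℝ)^n * ∑ i, (v i)^2 := by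
  have expand : ∀ ε : Fin n → Bool, (Sv v ε)^2
      = ∑ i, ∑ j, (v i * v j) * (rs (ε i) * rs (ε j)) := by
    intro ε
    rw [sq]
    unfold Sv
    rw [Finset.sum_mul_sum]
    apply Finset.sum_congr rfl; intro i _
    apply Finset.sum_congr rfl; intro j _
    ring
  simp_rw [expand]
  rw [Finset.sum_comm]
  have swap2 : ∀ i : Fin n, ∑ ε : Fin n → Bool, ∑ j, (v i * v j) * (rs (ε i) * rs (ε j))
      = ∑ j, (v i * v j) * ∑ ε : Fin n → Bool, (rs (ε i) * rs (ε j)) := by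
    intro i
    rw [Finset.sum_comm]
    exact Finset.sum_congr rfl (fun j _ => by rw [Finset.mul_sum])
  simp_rw [swap2]
  have inner : ∀ i j : Fin n, (∑ ε : Fin n → Bool, rs (ε i) * rs (ε j))
      = if j = i then (2:ℝ)^n else 0 := by
    intro i j
    by_cases hij : j = i
    · subst hij
      rw [if_pos rfl, ← card_cube]
      exact Finset.sum_congr rfl (fun ε _ => rs_sq (ε j))
    · rw [if_neg hij, orth (Ne.symm hij)]
  simp_rw [inner]
  rw [Finset.mul_sum]
  apply Finset.sum_congr rfl
  intro i _
  rw [Finset.sum_eq_single_of_mem i (Finset.mem_univ i)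
    (fun j _ hj => by rw [if_neg hj, mul_zero])]
  rw [if_pos rfl, sq]
  ring

lemma W_lower {ρ : ℝ} (h0 : 0 ≤ ρ) (h1 : ρ ≤ 1) :
    ρ * ∑ ε : Fin n → Bool, (Sv v ε)^2
      ≤ ∑ ε : Fin n → Bool, |Sv v ε| * ∑ η : Fin n → Bool, w ρ η * |Sv v (bop ε η)| := by
  rw [Finset.mul_sum]
  apply Finset.sum_le_sum
  intro ε _
  have habs : ρ * |Sv v ε| ≤ ∑ η : Fin n → Bool, w ρ η * |Sv v (bop ε η)| := by
    have h2 : |∑ η : Fin n → Bool, w ρ η * Sv v (bop ε η)|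
        ≤ ∑ η : Fin n → Bool, w ρ η * |Sv v (bop ε η)| := by
      refine (Finset.abs_sum_le_sum_abs _ _).trans ?_
      apply Finset.sum_le_sum
      intro η _
      rw [abs_mul, abs_of_nonneg (w_nonneg h0 h1 η)]
    rw [marg_S, abs_mul, abs_of_nonneg h0] at h2
    exact h2
  calc ρ * (Sv v ε)^2 = (ρ * |Sv v ε|) * |Sv v ε| := by
        rw [sq, ← abs_mul_abs_self]; ring
    _ ≤ (∑ η : Fin n → Bool, w ρ η * |Sv v (bop ε η)|) * |Sv v ε| := by
        apply mul_le_mul_of_nonneg_right habs (abs_nonneg _)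
    _ = |Sv v ε| * ∑ η : Fin n → Bool, w ρ η * |Sv v (bop ε η)| := by ring

lemma szarek_core :
    (2:ℝ)^n * ∑ ε : Fin n → Bool, (Sv v ε)^2
      ≤ 2 * (∑ ε : Fin n → Bool, |Sv v ε|)^2 := by
  set G : ℝ := ∑ ε : Fin n → Bool, |Sv v ε| with hG
  set Q : ℝ := ∑ ε : Fin n → Bool, (Sv v ε)^2 with hQ
  have hGnn : 0 ≤ G := Finset.sum_nonneg (fun ε _ => abs_nonneg _)
  have main : ∀ ρ : ℝ, 0 ≤ ρ → ρ ≤ 1 →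
      ρ * ((2:ℝ)^n * Q) ≤ G^2 + ρ^2 * ((2:ℝ)^n * Q - G^2) := by
    intro ρ h0 h1
    have step1 : ρ * ((2:ℝ)^n * Q) ≤ ∑ A : Finset (Fin n), ρ ^ A.card * (coeffA v A)^2 := by
      rw [← key_identity]
      have := W_lower v h0 h1
      nlinarith [pow_pos (show (0:ℝ) < 2 by norm_num) n]
    have step2 : ∑ A : Finset (Fin n), ρ ^ A.card * (coeffA v A)^2
        ≤ G^2 + ρ^2 * ((2:ℝ)^n * Q - G^2) := by
      rw [← Finset.add_sum_erase Finset.univ _ (Finset.mem_univ (∅ : Finset (Fin n)))]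
      have hc0 : ρ ^ (∅ : Finset (Fin n)).card * (coeffA v ∅)^2 = G^2 := by
        rw [Finset.card_empty, pow_zero, one_mul, coeff_empty]
      rw [hc0]
      have hrest : ∑ A ∈ Finset.univ.erase (∅ : Finset (Fin n)), ρ ^ A.card * (coeffA v A)^2
          ≤ ρ^2 * ((2:ℝ)^n * Q - G^2) := by
        have hparse : ∑ A ∈ Finset.univ.erase (∅ : Finset (Fin n)), (coeffA v A)^2
            = (2:ℝ)^n * Q - G^2 := by
          rw [Finset.sum_erase_eq_sub (Finset.mem_univ _), parseval, coeff_empty]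
        rw [← hparse, Finset.mul_sum]
        apply Finset.sum_le_sum
        intro A hA
        have hAne : A ≠ ∅ := (Finset.mem_erase.mp hA).1
        rcases Nat.lt_or_ge A.card 2 with hlt | hge
        · interval_cases hcard : A.card
          · exact absurd (Finset.card_eq_zero.mp hcard) hAne
          · obtain ⟨i, rfl⟩ := Finset.card_eq_one.mp hcard
            rw [coeff_singleton]
            simp
        · have : ρ ^ A.card ≤ ρ ^ 2 := pow_le_pow_of_le_one h0 h1 hge
          exact mul_le_mul_of_nonneg_right this (sq_nonneg _)
      linarith
    exact step1.trans step2
  by_cases hle : (2:ℝ)^n * Q ≤ 2 * G^2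
  · exact hle
  push_neg at hle
  exfalso
  set M : ℝ := (2:ℝ)^n * Q with hM
  have hGpos : 0 < G := by
    rcases hGnn.lt_or_eq with h | h
    · exact h
    · exfalso
      have hz : ∀ ε : Fin n → Bool, |Sv v ε| = 0 := by
        intro ε
        have h2 := (Finset.sum_eq_zero_iff_of_nonneg
          (s := (Finset.univ : Finset (Fin n → Bool))) (f := fun ε => |Sv v ε|)
          (fun ε _ => abs_nonneg (Sv v ε))).mp h.symm
        exact h2 ε (Finset.mem_univ ε)
      have hQ0 : Q = 0 := by
        rw [hQ]
        apply Finset.sum_eq_zero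
        intro ε _
        rw [sq, ← abs_mul_abs_self, hz ε, mul_zero]
      rw [hM, hQ0, mul_zero] at hle
      nlinarith
  have hMpos : 0 < M := by nlinarith
  set ρ : ℝ := 2 * G^2 / M with hρ
  have h0 : 0 ≤ ρ := by positivity
  have h1 : ρ < 1 := by
    rw [hρ, div_lt_one hMpos]
    exact hle
  have hρM : ρ * M = 2 * G^2 := by
    rw [hρ]; field_simp
  have hmain := main ρ h0 h1.le
  rw [hρM] at hmain
  have hρ2M : ρ^2 * M = ρ * (2 * G^2) := by rw [← hρM]; ring
  nlinarith [mul_pos (mul_pos hGpos hGpos) (mul_pos (sub_pos.mpr h1) (sub_pos.mpr h1)),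
    sq_nonneg (1 - ρ), mul_pos hGpos hGpos]

lemma szarek :
    Real.sqrt (∑ i, (v i)^2) * (2:ℝ)^n
      ≤ Real.sqrt 2 * ∑ ε : Fin n → Bool, |Sv v ε| := by
  have hG : 0 ≤ ∑ ε : Fin n → Bool, |Sv v ε| := Finset.sum_nonneg (fun ε _ => abs_nonneg _)
  have h := szarek_core v
  rw [Q_eq] at h
  have hv : 0 ≤ ∑ i, (v i)^2 := Finset.sum_nonneg (fun i _ => sq_nonneg _)
  have lhs_eq : Real.sqrt (∑ i, (v i)^2) * (2:ℝ)^n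
      = Real.sqrt ((2:ℝ)^n * ((2:ℝ)^n * ∑ i, (v i)^2)) := by
    rw [show (2:ℝ)^n * ((2:ℝ)^n * ∑ i, (v i)^2) = (∑ i, (v i)^2) * ((2:ℝ)^n)^2 by ring]
    rw [Real.sqrt_mul hv, Real.sqrt_sq (by positivity)]
  have rhs_eq : Real.sqrt 2 * ∑ ε : Fin n → Bool, |Sv v ε|
      = Real.sqrt (2 * (∑ ε : Fin n → Bool, |Sv v ε|)^2) := by
    rw [Real.sqrt_mul (by norm_num), Real.sqrt_sq hG]
  rw [lhs_eq, rhs_eq]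
  exact Real.sqrt_le_sqrt h

end SzarekSec

section Assembly
variable {n : ℕ}

/-- sign-vector trick for a linear functional -/
lemma sign_sum (T' : (Fin n → ℝ) →L[ℝ] ℝ) : ∑ k, |T' (Pi.single k 1)| ≤ ‖T'‖ := by
  classical
  set y : Fin n → ℝ := fun k => if 0 ≤ T' (Pi.single k 1) then 1 else -1 with hy
  have hyb : ‖y‖ ≤ 1 := by
    rw [pi_norm_le_iff_of_nonneg zero_le_one]
    intro k
    rw [Real.norm_eq_abs]
    simp only [hy]
    split <;> norm_num
  have hTy : T' y = ∑ k, |T' (Pi.single k 1)| := by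
    conv_lhs => rw [show y = ∑ k, Pi.single k (y k) from (Finset.univ_sum_single y).symm]
    rw [map_sum]
    apply Finset.sum_congr rfl
    intro k _
    have hsingle : Pi.single k (y k) = y k • (Pi.single k 1 : Fin n → ℝ) := by
      have h5 := Pi.single_smul (f := fun _ : Fin n => ℝ) k (y k) (1:ℝ)
      rw [smul_eq_mul, mul_one] at h5
      exact h5
    rw [hsingle, map_smul, smul_eq_mul]
    simp only [hy]
    split
    · rw [abs_of_nonneg ‹_›, one_mul]
    · rw [abs_of_neg (lt_of_not_ge ‹_›)]; ring
  calc ∑ k, |T' (Pi.single k 1)| = T' y := hTy.symm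
    _ ≤ |T' y| := le_abs_self _
    _ = ‖T' y‖ := (Real.norm_eq_abs _).symm
    _ ≤ ‖T'‖ * ‖y‖ := T'.le_opNorm y
    _ ≤ ‖T'‖ * 1 := by
        apply mul_le_mul_of_nonneg_left hyb (norm_nonneg _)
    _ = ‖T'‖ := mul_one _

variable (T : (Fin n → ℝ) →L[ℝ] (Fin n → ℝ) →L[ℝ] ℝ)

lemma expand_left (x z : Fin n → ℝ) :
    T x z = ∑ j, x j * T (Pi.single j 1) z := by
  conv_lhs => rw [show x = ∑ j, Pi.single j (x j) from (Finset.univ_sum_single x).symm]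
  rw [map_sum, ContinuousLinearMap.sum_apply]
  apply Finset.sum_congr rfl
  intro j _
  have hsingle : Pi.single j (x j) = x j • (Pi.single j 1 : Fin n → ℝ) := by
    have h5 := Pi.single_smul (f := fun _ : Fin n => ℝ) j (x j) (1:ℝ)
    rw [smul_eq_mul, mul_one] at h5
    exact h5
  rw [hsingle, map_smul, ContinuousLinearMap.smul_apply, smul_eq_mul]

lemma expand_right (x z : Fin n → ℝ) :
    T x z = ∑ k, z k * T x (Pi.single k 1) := by
  conv_lhs => rw [show z = ∑ k, Pi.single k (z k) from (Finset.univ_sum_single z).symm]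
  rw [map_sum]
  apply Finset.sum_congr rfl
  intro k _
  have hsingle : Pi.single k (z k) = z k • (Pi.single k 1 : Fin n → ℝ) := by
    have h5 := Pi.single_smul (f := fun _ : Fin n => ℝ) k (z k) (1:ℝ)
    rw [smul_eq_mul, mul_one] at h5
    exact h5
  rw [hsingle, map_smul, smul_eq_mul]

lemma key_col (x : Fin n → ℝ) (hx : ‖x‖ ≤ 1) :
    ∑ k, |T x (Pi.single k 1)| ≤ ‖T‖ := by
  calc ∑ k, |T x (Pi.single k 1)| ≤ ‖T x‖ := sign_sum (T x)
    _ ≤ ‖T‖ * ‖x‖ := T.le_opNorm x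
    _ ≤ ‖T‖ * 1 := mul_le_mul_of_nonneg_left hx (ContinuousLinearMap.opNorm_nonneg T)
    _ = ‖T‖ := mul_one _

lemma key_row (z : Fin n → ℝ) (hz : ‖z‖ ≤ 1) :
    ∑ j, |T (Pi.single j 1) z| ≤ ‖T‖ := by
  classical
  set x : Fin n → ℝ := fun j => if 0 ≤ T (Pi.single j 1) z then 1 else -1 with hx
  have hxb : ‖x‖ ≤ 1 := by
    rw [pi_norm_le_iff_of_nonneg zero_le_one]
    intro j
    rw [Real.norm_eq_abs]
    simp only [hx]
    split <;> norm_num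
  have hTx : T x z = ∑ j, |T (Pi.single j 1) z| := by
    rw [expand_left]
    apply Finset.sum_congr rfl
    intro j _
    simp only [hx]
    split
    · rw [abs_of_nonneg ‹_›, one_mul]
    · rw [abs_of_neg (lt_of_not_ge ‹_›)]; ring
  calc ∑ j, |T (Pi.single j 1) z| = T x z := hTx.symm
    _ ≤ |T x z| := le_abs_self _
    _ = ‖T x z‖ := (Real.norm_eq_abs _).symm
    _ ≤ ‖T x‖ * ‖z‖ := (T x).le_opNorm z
    _ ≤ ‖T x‖ * 1 := mul_le_mul_of_nonneg_left hz (norm_nonneg _)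
    _ = ‖T x‖ := mul_one _
    _ ≤ ‖T‖ * ‖x‖ := T.le_opNorm x
    _ ≤ ‖T‖ * 1 := mul_le_mul_of_nonneg_left hxb (ContinuousLinearMap.opNorm_nonneg T)
    _ = ‖T‖ := mul_one _

lemma rs_norm_le (ε : Fin n → Bool) : ‖(fun j => rs (ε j) : Fin n → ℝ)‖ ≤ 1 := by
  rw [pi_norm_le_iff_of_nonneg zero_le_one]
  intro j
  rw [Real.norm_eq_abs, rs_abs]


lemma cube_const (c : ℝ) : ∑ _ε : Fin n → Bool, c = (2:ℝ)^n * c := by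
  rw [Finset.sum_const, Finset.card_univ]
  simp [Fintype.card_fun]

lemma col_bound :
    ∑ k, Real.sqrt (∑ j, (T (Pi.single j 1) (Pi.single k 1))^2) ≤ Real.sqrt 2 * ‖T‖ := by
  have h2n : (0:ℝ) < 2^n := by positivity
  have per : ∀ k, Real.sqrt (∑ j, (T (Pi.single j 1) (Pi.single k 1))^2) * 2^n
      ≤ Real.sqrt 2 * ∑ ε : Fin n → Bool, |Sv (fun j => T (Pi.single j 1) (Pi.single k 1)) ε| :=
    fun k => szarek _
  have hsum : (∑ k, Real.sqrt (∑ j, (T (Pi.single j 1) (Pi.single k 1))^2)) * 2^n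
      ≤ Real.sqrt 2 * ∑ ε : Fin n → Bool,
          ∑ k, |Sv (fun j => T (Pi.single j 1) (Pi.single k 1)) ε| := by
    rw [Finset.sum_mul]
    rw [Finset.sum_comm (t := (Finset.univ : Finset (Fin n)))
      (s := (Finset.univ : Finset (Fin n → Bool)))
      (f := fun ε k => |Sv (fun j => T (Pi.single j 1) (Pi.single k 1)) ε|), Finset.mul_sum]
    exact Finset.sum_le_sum (fun k _ => per k)
  have hper_eps : ∀ ε : Fin n → Bool,
      ∑ k, |Sv (fun j => T (Pi.single j 1) (Pi.single k 1)) ε| ≤ ‖T‖ := by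
    intro ε
    have heq : ∀ k, Sv (fun j => T (Pi.single j 1) (Pi.single k 1)) ε
        = T (fun j => rs (ε j)) (Pi.single k 1) := by
      intro k
      rw [expand_left T (fun j => rs (ε j)) (Pi.single k 1)]
      unfold Sv
      exact Finset.sum_congr rfl (fun j _ => by ring)
    simp_rw [heq]
    exact key_col T _ (rs_norm_le ε)
  have : (∑ k, Real.sqrt (∑ j, (T (Pi.single j 1) (Pi.single k 1))^2)) * 2^n
      ≤ Real.sqrt 2 * ((2:ℝ)^n * ‖T‖) := by
    refine hsum.trans ?_
    apply mul_le_mul_of_nonneg_left _ (Real.sqrt_nonneg 2)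
    rw [← cube_const ‖T‖]
    exact Finset.sum_le_sum (fun ε _ => hper_eps ε)
  rw [show Real.sqrt 2 * ((2:ℝ)^n * ‖T‖) = (Real.sqrt 2 * ‖T‖) * 2^n by ring] at this
  exact le_of_mul_le_mul_right this h2n


lemma row_bound :
    ∑ j, Real.sqrt (∑ k, (T (Pi.single j 1) (Pi.single k 1))^2) ≤ Real.sqrt 2 * ‖T‖ := by
  have h2n : (0:ℝ) < 2^n := by positivity
  have per : ∀ j, Real.sqrt (∑ k, (T (Pi.single j 1) (Pi.single k 1))^2) * 2^n
      ≤ Real.sqrt 2 * ∑ δ : Fin n → Bool, |Sv (fun k => T (Pi.single j 1) (Pi.single k 1)) δ| :=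
    fun j => szarek _
  have hsum : (∑ j, Real.sqrt (∑ k, (T (Pi.single j 1) (Pi.single k 1))^2)) * 2^n
      ≤ Real.sqrt 2 * ∑ δ : Fin n → Bool,
          ∑ j, |Sv (fun k => T (Pi.single j 1) (Pi.single k 1)) δ| := by
    rw [Finset.sum_mul]
    rw [Finset.sum_comm (t := (Finset.univ : Finset (Fin n)))
      (s := (Finset.univ : Finset (Fin n → Bool)))
      (f := fun δ j => |Sv (fun k => T (Pi.single j 1) (Pi.single k 1)) δ|), Finset.mul_sum]
    exact Finset.sum_le_sum (fun j _ => per j)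
  have hper_eps : ∀ δ : Fin n → Bool,
      ∑ j, |Sv (fun k => T (Pi.single j 1) (Pi.single k 1)) δ| ≤ ‖T‖ := by
    intro δ
    have heq : ∀ j, Sv (fun k => T (Pi.single j 1) (Pi.single k 1)) δ
        = T (Pi.single j 1) (fun k => rs (δ k)) := by
      intro j
      rw [expand_right T (Pi.single j 1) (fun k => rs (δ k))]
      unfold Sv
      exact Finset.sum_congr rfl (fun k _ => by ring)
    simp_rw [heq]
    exact key_row T _ (rs_norm_le δ)
  have : (∑ j, Real.sqrt (∑ k, (T (Pi.single j 1) (Pi.single k 1))^2)) * 2^n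
      ≤ Real.sqrt 2 * ((2:ℝ)^n * ‖T‖) := by
    refine hsum.trans ?_
    apply mul_le_mul_of_nonneg_left _ (Real.sqrt_nonneg 2)
    rw [← cube_const ‖T‖]
    exact Finset.sum_le_sum (fun δ _ => hper_eps δ)
  rw [show Real.sqrt 2 * ((2:ℝ)^n * ‖T‖) = (Real.sqrt 2 * ‖T‖) * 2^n by ring] at this
  exact le_of_mul_le_mul_right this h2n

lemma holder_a (c : Fin n → ℝ) (hc : ∀ i, 0 ≤ c i) :
    ∑ i, c i ^ ((4:ℝ)/3) ≤ (∑ i, (c i) ^ 2) ^ ((1:ℝ)/3) * (∑ i, c i) ^ ((2:ℝ)/3) := by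
  have hpq : Real.HolderConjugate 3 (3/2) := Real.holderConjugate_iff.mpr ⟨by norm_num, by norm_num⟩
  have h := Real.inner_le_Lp_mul_Lq_of_nonneg (Finset.univ) hpq
    (f := fun i => c i ^ ((2:ℝ)/3)) (g := fun i => c i ^ ((2:ℝ)/3))
    (fun i _ => Real.rpow_nonneg (hc i) _) (fun i _ => Real.rpow_nonneg (hc i) _)
  have e1 : ∀ i, c i ^ ((2:ℝ)/3) * c i ^ ((2:ℝ)/3) = c i ^ ((4:ℝ)/3) := by
    intro i
    rw [← Real.rpow_add' (hc i) (by norm_num : (2:ℝ)/3 + 2/3 ≠ 0)]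
    norm_num
  have e2 : ∀ i, (c i ^ ((2:ℝ)/3)) ^ (3:ℝ) = (c i) ^ 2 := by
    intro i
    rw [← Real.rpow_natCast (c i) 2, ← Real.rpow_mul (hc i)]
    norm_num
  have e3 : ∀ i, (c i ^ ((2:ℝ)/3)) ^ ((3:ℝ)/2) = c i := by
    intro i
    rw [← Real.rpow_mul (hc i)]
    norm_num
  simp_rw [e1, e2, e3] at h
  convert h using 2 <;> norm_num

lemma holder_b (R S : Fin n → ℝ) (hR : ∀ j, 0 ≤ R j) (hS : ∀ j, 0 ≤ S j) :
    ∑ j, (R j)^((2:ℝ)/3) * (S j)^((2:ℝ)/3)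
      ≤ (∑ j, R j)^((2:ℝ)/3) * (∑ j, (S j)^2)^((1:ℝ)/3) := by
  have hpq : Real.HolderConjugate (3/2) 3 := Real.holderConjugate_iff.mpr ⟨by norm_num, by norm_num⟩
  have h := Real.inner_le_Lp_mul_Lq_of_nonneg (Finset.univ) hpq
    (f := fun j => R j ^ ((2:ℝ)/3)) (g := fun j => S j ^ ((2:ℝ)/3))
    (fun j _ => Real.rpow_nonneg (hR j) _) (fun j _ => Real.rpow_nonneg (hS j) _)
  have e2 : ∀ j, (R j ^ ((2:ℝ)/3)) ^ ((3:ℝ)/2) = R j := by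
    intro j
    rw [← Real.rpow_mul (hR j)]
    norm_num
  have e3 : ∀ j, (S j ^ ((2:ℝ)/3)) ^ (3:ℝ) = (S j) ^ 2 := by
    intro j
    rw [← Real.rpow_natCast (S j) 2, ← Real.rpow_mul (hS j)]
    norm_num
  simp_rw [e2, e3] at h
  convert h using 2 <;> norm_num

lemma minkowski_l2 (c : Fin n → Fin n → ℝ) :
    Real.sqrt (∑ j, (∑ k, |c j k|)^2) ≤ ∑ k, Real.sqrt (∑ j, (c j k)^2) := by
  classical
  set e := (WithLp.linearEquiv 2 ℝ (Fin n → ℝ)).symm with he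
  set u : Fin n → EuclideanSpace ℝ (Fin n) := fun k => e (fun j => |c j k|) with hu
  have hsum : (∑ k, u k) = e (fun j => ∑ k, |c j k|) := by
    rw [← map_sum]
    congr 1
    funext j
    rw [Finset.sum_apply]
  have hnorm : ∀ (z : Fin n → ℝ), ‖e z‖ = Real.sqrt (∑ j, (z j)^2) := by
    intro z
    rw [EuclideanSpace.norm_eq]
    congr 1
    apply Finset.sum_congr rfl
    intro j _
    rw [Real.norm_eq_abs, sq_abs]
    rfl
  calc Real.sqrt (∑ j, (∑ k, |c j k|)^2) = ‖∑ k, u k‖ := by rw [hsum, hnorm]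
    _ ≤ ∑ k, ‖u k‖ := norm_sum_le _ _
    _ = ∑ k, Real.sqrt (∑ j, (c j k)^2) := by
        apply Finset.sum_congr rfl
        intro k _
        rw [hu, hnorm]
        congr 1
        exact Finset.sum_congr rfl (fun j _ => by rw [sq_abs])

end Assembly
end LW

open LW in
/-- Littlewood's 4/3 inequality for real bilinear forms on `ℓ_∞^n`. -/
theorem littlewood_four_thirds (n : ℕ)
    (T : (Fin n → ℝ) →L[ℝ] (Fin n → ℝ) →L[ℝ] ℝ) :
    (∑ j : Fin n, ∑ k : Fin n,
        |T (Pi.single j 1) (Pi.single k 1)| ^ ((4 : ℝ) / 3)) ^ ((3 : ℝ) / 4)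
      ≤ Real.sqrt 2 * ‖T‖ := by
  classical
  set a : Fin n → Fin n → ℝ := fun j k => T (Pi.single j 1) (Pi.single k 1) with ha
  set K : ℝ := Real.sqrt 2 * ‖T‖ with hKdef
  have hK : 0 ≤ K := mul_nonneg (Real.sqrt_nonneg 2) (ContinuousLinearMap.opNorm_nonneg T)
  set R : Fin n → ℝ := fun j => Real.sqrt (∑ k, (a j k)^2) with hR
  set SS : Fin n → ℝ := fun j => ∑ k, |a j k| with hSS
  set A : ℝ := ∑ j, R j with hA
  set Bq : ℝ := ∑ k, Real.sqrt (∑ j, (a j k)^2) with hBq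
  have hRnn : ∀ j, 0 ≤ R j := fun j => Real.sqrt_nonneg _
  have hSSnn : ∀ j, 0 ≤ SS j := fun j => Finset.sum_nonneg (fun k _ => abs_nonneg _)
  have hAnn : 0 ≤ A := Finset.sum_nonneg (fun j _ => hRnn j)
  have hBnn : 0 ≤ Bq := Finset.sum_nonneg (fun k _ => Real.sqrt_nonneg _)
  have hAK : A ≤ K := row_bound T
  have hBK : Bq ≤ K := col_bound T
  -- step 1 : per-row Hölder
  have t1 : ∀ j, ∑ k, |a j k| ^ ((4:ℝ)/3) ≤ (R j)^((2:ℝ)/3) * (SS j)^((2:ℝ)/3) := by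
    intro j
    have h := holder_a (fun k => |a j k|) (fun k => abs_nonneg _)
    have e4 : (∑ k, |a j k| ^ 2) ^ ((1:ℝ)/3) = (R j)^((2:ℝ)/3) := by
      have hx : 0 ≤ ∑ k, (a j k)^2 := Finset.sum_nonneg (fun k _ => sq_nonneg _)
      have : (∑ k, |a j k| ^ 2) = ∑ k, (a j k)^2 :=
        Finset.sum_congr rfl (fun k _ => sq_abs _)
      rw [this]
      show (∑ k, a j k ^ 2) ^ ((1:ℝ)/3) = (Real.sqrt (∑ k, a j k ^ 2)) ^ ((2:ℝ)/3)
      rw [Real.sqrt_eq_rpow, ← Real.rpow_mul hx]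
      norm_num
    rw [e4] at h
    exact h
  -- step 2 : Hölder across rows
  have t2 : ∑ j, (R j)^((2:ℝ)/3) * (SS j)^((2:ℝ)/3)
      ≤ A^((2:ℝ)/3) * (∑ j, (SS j)^2)^((1:ℝ)/3) :=
    holder_b R SS hRnn hSSnn
  -- step 3 : Minkowski
  have t3 : ∑ j, (SS j)^2 ≤ Bq^2 := by
    have hm := minkowski_l2 a
    have hnn : 0 ≤ ∑ j, (SS j)^2 := Finset.sum_nonneg (fun j _ => sq_nonneg _)
    have h1 : Real.sqrt (∑ j, (SS j)^2) ≤ Bq := hm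
    calc ∑ j, (SS j)^2 = (Real.sqrt (∑ j, (SS j)^2))^2 := (Real.sq_sqrt hnn).symm
      _ ≤ Bq^2 := pow_le_pow_left₀ (Real.sqrt_nonneg _) h1 2
  -- combine
  have htot : ∑ j : Fin n, ∑ k : Fin n, |a j k| ^ ((4:ℝ)/3) ≤ K ^ ((4:ℝ)/3) := by
    have c1 : ∑ j : Fin n, ∑ k : Fin n, |a j k| ^ ((4:ℝ)/3)
        ≤ ∑ j, (R j)^((2:ℝ)/3) * (SS j)^((2:ℝ)/3) :=
      Finset.sum_le_sum (fun j _ => t1 j)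
    have c2 : A^((2:ℝ)/3) * (∑ j, (SS j)^2)^((1:ℝ)/3) ≤ K^((2:ℝ)/3) * (K^2)^((1:ℝ)/3) := by
      apply mul_le_mul
      · exact Real.rpow_le_rpow hAnn hAK (by norm_num)
      · apply Real.rpow_le_rpow (Finset.sum_nonneg (fun j _ => sq_nonneg _))
          (t3.trans (pow_le_pow_left₀ hBnn hBK 2)) (by norm_num)
      · exact Real.rpow_nonneg (Finset.sum_nonneg (fun j _ => sq_nonneg _)) _
      · exact Real.rpow_nonneg hK _
    have c3 : K^((2:ℝ)/3) * (K^2)^((1:ℝ)/3) = K ^ ((4:ℝ)/3) := by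
      have e5 : (K^2)^((1:ℝ)/3) = K^((2:ℝ)/3) := by
        rw [← Real.rpow_natCast K 2, ← Real.rpow_mul hK]
        norm_num
      rw [e5, ← Real.rpow_add' hK (by norm_num : (2:ℝ)/3 + 2/3 ≠ 0)]
      norm_num
    calc ∑ j : Fin n, ∑ k : Fin n, |a j k| ^ ((4:ℝ)/3)
        ≤ ∑ j, (R j)^((2:ℝ)/3) * (SS j)^((2:ℝ)/3) := c1
      _ ≤ A^((2:ℝ)/3) * (∑ j, (SS j)^2)^((1:ℝ)/3) := t2
      _ ≤ K^((2:ℝ)/3) * (K^2)^((1:ℝ)/3) := c2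
      _ = K ^ ((4:ℝ)/3) := c3
  have htotnn : 0 ≤ ∑ j : Fin n, ∑ k : Fin n, |a j k| ^ ((4:ℝ)/3) :=
    Finset.sum_nonneg (fun j _ => Finset.sum_nonneg
      (fun k _ => Real.rpow_nonneg (abs_nonneg _) _))
  calc (∑ j : Fin n, ∑ k : Fin n, |a j k| ^ ((4:ℝ)/3)) ^ ((3:ℝ)/4)
      ≤ (K ^ ((4:ℝ)/3)) ^ ((3:ℝ)/4) := Real.rpow_le_rpow htotnn htot (by norm_num)
    _ = K := by
        rw [← Real.rpow_mul hK]
        norm_num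
end

section
/- For m ≥ 2 and any m-linear form T : ℓ_∞^n × ··· × ℓ_∞^n → ℝ, the Bohnenblust–Hille-type mixed inequality holds: for each fixed i, (∑_{ĵ_i} |T(e_{j_1},...,e_{j_m})|^2)^{1/2} ≤ (√2)^{m-1} ∫_{[0,1]^{m-1}} |∑_{ĵ_i} r_{j_2}(t_2)···r_{j_m}(t_m) T(e_{j_1},...,e_{j_m})| dt ≤ (√2)^{m-1} ‖T(e_{j_i}, ·,...,·)‖ for each fixed value of j_i, where ∑_{ĵ_i} sums over all indices except j_i. -/
open Finset

namespace BHmk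
set_option linter.unusedSectionVars false
set_option linter.unusedVariables false


noncomputable def sgn (b : Bool) : ℝ := if b then 1 else -1
lemma sgn_mul_self (b : Bool) : sgn b * sgn b = 1 := by cases b <;> simp [sgn]
lemma sgn_not (b : Bool) : sgn (!b) = - sgn b := by cases b <;> simp [sgn]
lemma abs_sgn (b : Bool) : |sgn b| = 1 := by cases b <;> simp [sgn]

variable {ι : Type*} [Fintype ι] [DecidableEq ι]

noncomputable def chi (A : Finset ι) (ε : ι → Bool) : ℝ := ∏ i ∈ A, sgn (ε i)

def flip (i₀ : ι) (ε : ι → Bool) : ι → Bool := Function.update ε i₀ (!(ε i₀))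

lemma flip_flip (i₀ : ι) (ε : ι → Bool) : flip i₀ (flip i₀ ε) = ε := by
  funext k
  by_cases h : k = i₀
  · subst h; simp [flip]
  · simp [flip, Function.update_of_ne h]

def flipEquiv (i₀ : ι) : (ι → Bool) ≃ (ι → Bool) :=
  ⟨flip i₀, flip i₀, flip_flip i₀, flip_flip i₀⟩

lemma chi_flip (A : Finset ι) (i₀ : ι) (ε : ι → Bool) :
    chi A (flip i₀ ε) = (if i₀ ∈ A then -1 else 1) * chi A ε := by
  by_cases h : i₀ ∈ A
  · rw [if_pos h]
    unfold chi
    rw [← Finset.mul_prod_erase A _ h, ← Finset.mul_prod_erase A (fun i => sgn (ε i)) h]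
    have h1 : (flip i₀ ε) i₀ = !(ε i₀) := by simp [flip]
    have h2 : ∀ k ∈ A.erase i₀, sgn ((flip i₀ ε) k) = sgn (ε k) := by
      intro k hk
      have : k ≠ i₀ := Finset.ne_of_mem_erase hk
      simp [flip, Function.update_of_ne this]
    rw [Finset.prod_congr rfl h2, h1, sgn_not]
    ring
  · rw [if_neg h, one_mul]
    unfold chi
    refine Finset.prod_congr rfl (fun k hk => ?_)
    have : k ≠ i₀ := fun e => h (e ▸ hk)
    simp [flip, Function.update_of_ne this]

lemma sum_flip (i₀ : ι) (F : (ι → Bool) → ℝ) :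
    ∑ ε : ι → Bool, F (flip i₀ ε) = ∑ ε : ι → Bool, F ε :=
  Fintype.sum_bijective (flipEquiv i₀) (flipEquiv i₀).bijective _ _ (fun ε => rfl)

lemma sum_chi (A : Finset ι) (hA : A ≠ ∅) : ∑ ε : ι → Bool, chi A ε = 0 := by
  obtain ⟨i₀, hi₀⟩ := Finset.nonempty_iff_ne_empty.2 hA
  have h3 : ∑ ε : ι → Bool, chi A (flip i₀ ε) = - ∑ ε : ι → Bool, chi A ε := by
    simp_rw [chi_flip A i₀, if_pos hi₀]
    rw [← Finset.sum_neg_distrib]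
    exact Finset.sum_congr rfl (fun ε _ => by ring)
  have h2 := sum_flip i₀ (chi A)
  linarith

/-- number of points of the cube -/
lemma card_cube : (Fintype.card (ι → Bool) : ℝ) = 2 ^ (Fintype.card ι) := by
  simp [Fintype.card_fun]

lemma chi_mul_chi_same (A : Finset ι) (ε : ι → Bool) : chi A ε * chi A ε = 1 := by
  unfold chi
  rw [← Finset.prod_mul_distrib]
  exact Finset.prod_eq_one (fun i _ => sgn_mul_self _)

lemma sum_chi_mul_chi_pt (ε ε' : ι → Bool) :
    ∑ A : Finset ι, chi A ε * chi A ε'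
      = if ε = ε' then (2 : ℝ) ^ (Fintype.card ι) else 0 := by
  have key : ∑ A : Finset ι, chi A ε * chi A ε'
      = ∏ i : ι, (sgn (ε i) * sgn (ε' i) + 1) := by
    rw [Finset.prod_add]
    rw [← Finset.powerset_univ]
    refine (Finset.sum_congr rfl (fun A _ => ?_)).symm
    simp only [Finset.prod_const_one, mul_one]
    unfold chi
    rw [← Finset.prod_mul_distrib]
  rw [key]
  by_cases h : ε = ε'
  · subst h
    rw [if_pos rfl]
    have : ∀ i : ι, sgn (ε i) * sgn (ε i) + 1 = 2 := fun i => by rw [sgn_mul_self]; norm_num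
    rw [Finset.prod_congr rfl (fun i _ => this i), Finset.prod_const]
    simp
  · rw [if_neg h]
    obtain ⟨i₀, hi₀⟩ : ∃ i₀, ε i₀ ≠ ε' i₀ := by
      by_contra hc
      push_neg at hc
      exact h (funext hc)
    refine Finset.prod_eq_zero (Finset.mem_univ i₀) ?_
    have : sgn (ε i₀) * sgn (ε' i₀) = -1 := by
      cases hb : ε i₀ <;> cases hb' : ε' i₀ <;> simp_all [sgn]
    rw [this]; ring

noncomputable def fhat (f : (ι → Bool) → ℝ) (A : Finset ι) : ℝ :=
  (∑ ε : ι → Bool, f ε * chi A ε) / 2 ^ (Fintype.card ι)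

lemma inversion (f : (ι → Bool) → ℝ) (ε : ι → Bool) :
    f ε = ∑ A : Finset ι, fhat f A * chi A ε := by
  unfold fhat
  simp_rw [div_mul_eq_mul_div, Finset.sum_mul, ← Finset.sum_div]
  rw [Finset.sum_comm]
  have : ∀ ε' : ι → Bool, ∑ A : Finset ι, f ε' * chi A ε' * chi A ε
      = f ε' * (if ε' = ε then (2:ℝ) ^ (Fintype.card ι) else 0) := by
    intro ε'
    rw [← sum_chi_mul_chi_pt ε' ε, Finset.mul_sum]
    exact Finset.sum_congr rfl (fun A _ => by ring)
  rw [Finset.sum_congr rfl (fun ε' _ => this ε')]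
  simp_rw [mul_ite, mul_zero]
  rw [Finset.sum_ite_eq' Finset.univ ε (fun ε' => f ε' * (2:ℝ) ^ (Fintype.card ι))]
  simp only [Finset.mem_univ, if_true]
  field_simp

lemma parseval (f : (ι → Bool) → ℝ) :
    ∑ ε : ι → Bool, f ε ^ 2 = 2 ^ (Fintype.card ι) * ∑ A : Finset ι, fhat f A ^ 2 := by
  have : ∀ ε : ι → Bool, f ε ^ 2 = f ε * ∑ A : Finset ι, fhat f A * chi A ε := by
    intro ε; rw [← inversion]; ring
  simp_rw [this, Finset.mul_sum]
  rw [Finset.sum_comm]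
  refine Finset.sum_congr rfl (fun A _ => ?_)
  have : ∀ ε : ι → Bool, f ε * (fhat f A * chi A ε) = fhat f A * (f ε * chi A ε) := fun ε => by ring
  simp_rw [this, ← Finset.mul_sum]
  have hs : ∑ ε : ι → Bool, f ε * chi A ε = fhat f A * 2 ^ (Fintype.card ι) := by
    unfold fhat; field_simp
  rw [hs]; ring


-- global negation
def neg (ε : ι → Bool) : ι → Bool := fun i => !(ε i)

lemma neg_neg' (ε : ι → Bool) : neg (neg ε) = ε := by funext i; simp [neg]

lemma sum_neg (F : (ι → Bool) → ℝ) :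
    ∑ ε : ι → Bool, F (neg ε) = ∑ ε : ι → Bool, F ε :=
  Fintype.sum_bijective (⟨neg, neg, neg_neg', neg_neg'⟩ : (ι → Bool) ≃ (ι → Bool)).toFun
    (Equiv.bijective _) _ _ (fun ε => rfl)

lemma chi_neg (A : Finset ι) (ε : ι → Bool) :
    chi A (neg ε) = (-1) ^ A.card * chi A ε := by
  unfold chi
  have : ∀ i ∈ A, sgn ((neg ε) i) = -1 * sgn (ε i) := fun i _ => by
    simp [neg, sgn_not]
  rw [Finset.prod_congr rfl this, Finset.prod_mul_distrib, Finset.prod_const]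

lemma fhat_odd (f : (ι → Bool) → ℝ) (hf : ∀ ε, f (neg ε) = f ε)
    (A : Finset ι) (hA : ¬ Even A.card) : fhat f A = 0 := by
  have h1 : ∑ ε : ι → Bool, f ε * chi A ε = - ∑ ε : ι → Bool, f ε * chi A ε := by
    conv_lhs => rw [← sum_neg (fun ε => f ε * chi A ε)]
    rw [← Finset.sum_neg_distrib]
    refine Finset.sum_congr rfl (fun ε _ => ?_)
    rw [hf, chi_neg, Odd.neg_one_pow (Nat.not_even_iff_odd.1 hA)]
    ring
  have h2 : ∑ ε : ι → Bool, f ε * chi A ε = 0 := by linarith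
  unfold fhat; rw [h2]; simp

/-- Fourier coefficients of the discrete i₀-derivative -/
lemma fhat_deriv (f : (ι → Bool) → ℝ) (i₀ : ι) (A : Finset ι) :
    fhat (fun ε => (f ε - f (flip i₀ ε)) / 2) A
      = if i₀ ∈ A then fhat f A else 0 := by
  have key : ∑ ε : ι → Bool, f (flip i₀ ε) * chi A ε
      = (if i₀ ∈ A then -1 else 1) * ∑ ε : ι → Bool, f ε * chi A ε := by
    conv_lhs => rw [← sum_flip i₀ (fun ε => f (flip i₀ ε) * chi A ε)]
    have : ∀ ε : ι → Bool, f (flip i₀ (flip i₀ ε)) * chi A (flip i₀ ε)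
        = (if i₀ ∈ A then -1 else 1) * (f ε * chi A ε) := by
      intro ε
      have hff : flip i₀ (flip i₀ ε) = ε := by
        funext k
        by_cases h : k = i₀
        · subst h; simp [flip]
        · simp [flip, Function.update_of_ne h]
      rw [hff, chi_flip]
      ring
    rw [Finset.sum_congr rfl (fun ε _ => this ε), ← Finset.mul_sum]
  unfold fhat
  have e1 : ∑ ε : ι → Bool, (f ε - f (flip i₀ ε)) / 2 * chi A ε
      = ((∑ ε : ι → Bool, f ε * chi A ε) - ∑ ε : ι → Bool, f (flip i₀ ε) * chi A ε) / 2 := by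
    rw [← Finset.sum_sub_distrib, Finset.sum_div]
    exact Finset.sum_congr rfl (fun ε _ => by ring)
  rw [e1, key]
  by_cases h : i₀ ∈ A <;> simp [h] <;> ring

/-- derivative bound: Fourier mass on sets containing i₀ -/
lemma sum_sq_fhat_mem (f : (ι → Bool) → ℝ) (i₀ : ι) (a : ℝ)
    (hbd : ∀ ε, |f ε - f (flip i₀ ε)| ≤ 2 * a) :
    ∑ A ∈ Finset.univ.filter (fun A : Finset ι => i₀ ∈ A), fhat f A ^ 2 ≤ a ^ 2 := by
  have ha : 0 ≤ a := by
    have := hbd (fun _ => true)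
    have h0 : (0:ℝ) ≤ |f (fun _ => true) - f (flip i₀ (fun _ => true))| := abs_nonneg _
    linarith
  set g : (ι → Bool) → ℝ := fun ε => (f ε - f (flip i₀ ε)) / 2 with hg
  have h1 : ∑ A ∈ Finset.univ.filter (fun A : Finset ι => i₀ ∈ A), fhat f A ^ 2
      = ∑ A : Finset ι, fhat g A ^ 2 := by
    rw [Finset.sum_filter]
    refine Finset.sum_congr rfl (fun A _ => ?_)
    rw [hg, fhat_deriv f i₀ A]
    by_cases h : i₀ ∈ A <;> simp [h]
  have h2 : 2 ^ (Fintype.card ι) * ∑ A : Finset ι, fhat g A ^ 2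
      = ∑ ε : ι → Bool, g ε ^ 2 := (parseval g).symm
  have h3 : ∑ ε : ι → Bool, g ε ^ 2 ≤ ∑ ε : ι → Bool, a ^ 2 := by
    refine Finset.sum_le_sum (fun ε _ => ?_)
    have hge : |g ε| = |f ε - f (flip i₀ ε)| / 2 := by
      rw [hg]; rw [abs_div]; norm_num
    have : |g ε| ≤ a := by
      rw [hge]; have := hbd ε; linarith
    calc g ε ^ 2 = |g ε| ^ 2 := (sq_abs _).symm
      _ ≤ a ^ 2 := by nlinarith [abs_nonneg (g ε)]
  have h4 : ∑ ε : ι → Bool, (a:ℝ) ^ 2 = 2 ^ (Fintype.card ι) * a ^ 2 := by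
    rw [Finset.sum_const, Finset.card_univ]
    simp [Fintype.card_fun, nsmul_eq_mul]
    try ring
  have hpos : (0:ℝ) < 2 ^ (Fintype.card ι) := by positivity
  rw [h1]
  nlinarith [h2, h3, h4]


lemma card_cube2 : ((Fintype.card (ι → Bool) : ℝ)) = 2 ^ (Fintype.card ι) := by
  simp [Fintype.card_fun]

lemma sum_sgn_mul_sgn (i j : ι) :
    ∑ ε : ι → Bool, sgn (ε i) * sgn (ε j)
      = if i = j then (2:ℝ) ^ (Fintype.card ι) else 0 := by
  by_cases h : i = j
  · subst h
    rw [if_pos rfl]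
    rw [Finset.sum_congr rfl (fun ε _ => sgn_mul_self (ε i)), Finset.sum_const,
      Finset.card_univ]
    simp [Fintype.card_fun]
  · rw [if_neg h]
    have key : ∑ ε : ι → Bool, sgn ((flip i ε) i) * sgn ((flip i ε) j)
        = - ∑ ε : ι → Bool, sgn (ε i) * sgn (ε j) := by
      rw [← Finset.sum_neg_distrib]
      refine Finset.sum_congr rfl (fun ε _ => ?_)
      have h1 : (flip i ε) i = !(ε i) := by simp [flip]
      have h2 : (flip i ε) j = ε j := by
        simp [flip, Function.update_of_ne (Ne.symm h)]
      rw [h1, h2, sgn_not]; ring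
    have h2 := sum_flip i (fun ε => sgn (ε i) * sgn (ε j))
    -- h2 : ∑ ε, sgn ((flip i ε) i) * sgn ((flip i ε) j) = ∑ ε, sgn (ε i) * sgn (ε j)
    rw [key] at h2
    linarith

lemma sum_linear_sq (a : ι → ℝ) :
    ∑ ε : ι → Bool, (∑ i : ι, sgn (ε i) * a i) ^ 2
      = 2 ^ (Fintype.card ι) * ∑ i : ι, a i ^ 2 := by
  have expand : ∀ ε : ι → Bool, (∑ i : ι, sgn (ε i) * a i) ^ 2
      = ∑ i : ι, ∑ j : ι, (a i * a j) * (sgn (ε i) * sgn (ε j)) := by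
    intro ε
    rw [sq, Finset.sum_mul_sum]
    exact Finset.sum_congr rfl (fun i _ => Finset.sum_congr rfl (fun j _ => by ring))
  simp_rw [expand]
  rw [Finset.sum_comm]
  have : ∀ i : ι, ∑ j : ι, ∑ ε : ι → Bool, (a i * a j) * (sgn (ε i) * sgn (ε j))
      = 2 ^ (Fintype.card ι) * a i ^ 2 := by
    intro i
    have inner : ∀ j : ι, ∑ ε : ι → Bool, (a i * a j) * (sgn (ε i) * sgn (ε j))
        = (a i * a j) * (if i = j then (2:ℝ) ^ (Fintype.card ι) else 0) := by
      intro j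
      rw [← Finset.mul_sum, sum_sgn_mul_sgn]
    rw [Finset.sum_congr rfl (fun j _ => inner j)]
    simp_rw [mul_ite, mul_zero]
    rw [Finset.sum_ite_eq Finset.univ i (fun j => a i * a j * (2:ℝ) ^ (Fintype.card ι))]
    simp only [Finset.mem_univ, if_true]
    ring
  have swap2 : ∀ i : ι, ∑ ε : ι → Bool, ∑ j : ι, (a i * a j) * (sgn (ε i) * sgn (ε j))
      = ∑ j : ι, ∑ ε : ι → Bool, (a i * a j) * (sgn (ε i) * sgn (ε j)) :=
    fun i => Finset.sum_comm
  rw [Finset.sum_congr rfl (fun i _ => swap2 i), Finset.sum_congr rfl (fun i _ => this i),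
    ← Finset.mul_sum]

theorem khinchin_L1 (a : ι → ℝ) :
    Real.sqrt (∑ i : ι, a i ^ 2)
      ≤ Real.sqrt 2 * ((∑ ε : ι → Bool, |∑ i : ι, sgn (ε i) * a i|)
          / (Fintype.card (ι → Bool) : ℝ)) := by
  classical
  set N : ℝ := 2 ^ (Fintype.card ι) with hN
  have hNpos : (0:ℝ) < N := by positivity
  set S : (ι → Bool) → ℝ := fun ε => ∑ i : ι, sgn (ε i) * a i with hSdef
  set f : (ι → Bool) → ℝ := fun ε => |S ε| with hfdef
  -- second moment
  have hf2 : ∑ ε : ι → Bool, f ε ^ 2 = N * ∑ i : ι, a i ^ 2 := by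
    have : ∀ ε : ι → Bool, f ε ^ 2 = S ε ^ 2 := fun ε => sq_abs _
    rw [Finset.sum_congr rfl (fun ε _ => this ε)]
    exact sum_linear_sq a
  -- evenness
  have heven : ∀ ε : ι → Bool, f (neg ε) = f ε := by
    intro ε
    have : S (neg ε) = - S ε := by
      rw [hSdef]
      simp only [← Finset.sum_neg_distrib]
      refine Finset.sum_congr rfl (fun i _ => ?_)
      show sgn (!(ε i)) * a i = -(sgn (ε i) * a i)
      rw [sgn_not]; ring
    show |S (neg ε)| = |S ε|
    rw [this, abs_neg]
  -- flip identity and derivative bound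
  have hflipS : ∀ (i : ι) (ε : ι → Bool), S (flip i ε) = S ε - 2 * sgn (ε i) * a i := by
    intro i ε
    have h1 : S (flip i ε) = sgn (!(ε i)) * a i
        + ∑ v ∈ Finset.univ.erase i, sgn (ε v) * a v := by
      rw [hSdef]
      show ∑ v : ι, sgn ((flip i ε) v) * a v = _
      rw [← Finset.add_sum_erase Finset.univ _ (Finset.mem_univ i)]
      congr 1
      · congr 1
        simp [flip]
      · refine Finset.sum_congr rfl (fun v hv => ?_)
        have : v ≠ i := Finset.ne_of_mem_erase hv
        simp [flip, Function.update_of_ne this]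
    have h2 : S ε = sgn (ε i) * a i + ∑ v ∈ Finset.univ.erase i, sgn (ε v) * a v := by
      rw [hSdef]
      exact (Finset.add_sum_erase Finset.univ _ (Finset.mem_univ i)).symm
    rw [h1, h2, sgn_not]
    ring
  have hbd : ∀ (i : ι) (ε : ι → Bool), |f ε - f (flip i ε)| ≤ 2 * |a i| := by
    intro i ε
    have h1 : |f ε - f (flip i ε)| ≤ |S ε - S (flip i ε)| := abs_abs_sub_abs_le_abs_sub _ _
    have h2 : S ε - S (flip i ε) = 2 * sgn (ε i) * a i := by rw [hflipS]; ring
    rw [h2] at h1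
    calc |f ε - f (flip i ε)| ≤ |2 * sgn (ε i) * a i| := h1
      _ = 2 * |a i| := by
          rw [abs_mul, abs_mul, abs_sgn]
          simp [abs_of_nonneg]
  -- variance bound
  have hvar : ∑ A ∈ Finset.univ.filter (fun A : Finset ι => A ≠ ∅), fhat f A ^ 2
      ≤ (1/2) * ∑ i : ι, a i ^ 2 := by
    have step1 : ∑ A ∈ Finset.univ.filter (fun A : Finset ι => A ≠ ∅), fhat f A ^ 2
        ≤ (1/2) * ∑ A : Finset ι, (A.card : ℝ) * fhat f A ^ 2 := by
      rw [Finset.sum_filter, Finset.mul_sum]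
      refine Finset.sum_le_sum (fun A _ => ?_)
      by_cases hA : A = ∅
      · simp [hA]
      · rw [if_pos hA]
        by_cases hev : Even A.card
        · have hc2 : (2:ℝ) ≤ (A.card : ℝ) := by
            have h1 : A.card ≠ 0 := by
              simp [Finset.card_eq_zero]; exact hA
            have : 2 ≤ A.card := by
              rcases hev with ⟨r, hr⟩
              omega
            exact_mod_cast this
          nlinarith [sq_nonneg (fhat f A)]
        · rw [fhat_odd f heven A hev]
          simp
    have step2 : ∑ A : Finset ι, (A.card : ℝ) * fhat f A ^ 2
        = ∑ i : ι, ∑ A ∈ Finset.univ.filter (fun A : Finset ι => i ∈ A), fhat f A ^ 2 := by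
      have e1 : ∀ A : Finset ι, (A.card : ℝ) * fhat f A ^ 2
          = ∑ i : ι, (if i ∈ A then fhat f A ^ 2 else 0) := by
        intro A
        rw [Finset.sum_ite_mem, Finset.univ_inter, Finset.sum_const, nsmul_eq_mul]
      rw [Finset.sum_congr rfl (fun A _ => e1 A), Finset.sum_comm]
      exact Finset.sum_congr rfl (fun i _ => (Finset.sum_filter _ _).symm)
    have step3 : ∑ i : ι, ∑ A ∈ Finset.univ.filter (fun A : Finset ι => i ∈ A), fhat f A ^ 2
        ≤ ∑ i : ι, a i ^ 2 := by
      refine Finset.sum_le_sum (fun i _ => ?_)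
      have := sum_sq_fhat_mem f i |a i| (fun ε => hbd i ε)
      calc ∑ A ∈ Finset.univ.filter (fun A : Finset ι => i ∈ A), fhat f A ^ 2
          ≤ |a i| ^ 2 := this
        _ = a i ^ 2 := sq_abs _
    calc ∑ A ∈ Finset.univ.filter (fun A : Finset ι => A ≠ ∅), fhat f A ^ 2
        ≤ (1/2) * ∑ A : Finset ι, (A.card : ℝ) * fhat f A ^ 2 := step1
      _ = (1/2) * ∑ i : ι, ∑ A ∈ Finset.univ.filter (fun A : Finset ι => i ∈ A), fhat f A ^ 2 := by
          rw [step2]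
      _ ≤ (1/2) * ∑ i : ι, a i ^ 2 := by linarith [step3]
  -- combine via Parseval
  have hmean : fhat f ∅ = (∑ ε : ι → Bool, f ε) / N := by
    unfold fhat chi
    simp [hN]
  have hsplit : ∑ A : Finset ι, fhat f A ^ 2
      = fhat f ∅ ^ 2 + ∑ A ∈ Finset.univ.filter (fun A : Finset ι => A ≠ ∅), fhat f A ^ 2 := by
    have he : Finset.univ.filter (fun A : Finset ι => A ≠ ∅) = Finset.univ.erase ∅ :=
      Finset.filter_ne' _ _
    rw [he]
    exact (Finset.add_sum_erase _ _ (Finset.mem_univ ∅)).symm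
  have hE : (0:ℝ) ≤ (∑ ε : ι → Bool, f ε) / N :=
    div_nonneg (Finset.sum_nonneg (fun ε _ => abs_nonneg _)) hNpos.le
  have hkey : ∑ i : ι, a i ^ 2 ≤ 2 * ((∑ ε : ι → Bool, f ε) / N) ^ 2 := by
    have hp := parseval f
    rw [hsplit, hmean, hf2] at hp
    nlinarith [hvar, hNpos]
  have hsq := Real.sqrt_le_sqrt hkey
  have h2 : Real.sqrt (2 * ((∑ ε : ι → Bool, f ε) / N) ^ 2)
      = Real.sqrt 2 * ((∑ ε : ι → Bool, f ε) / N) := by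
    rw [Real.sqrt_mul (by norm_num : (0:ℝ) ≤ 2), Real.sqrt_sq hE]
  have hcard : (Fintype.card (ι → Bool) : ℝ) = N := card_cube2
  calc Real.sqrt (∑ i : ι, a i ^ 2)
      ≤ Real.sqrt 2 * ((∑ ε : ι → Bool, f ε) / N) := by rw [← h2]; exact hsq
    _ = Real.sqrt 2 * ((∑ ε : ι → Bool, |∑ i : ι, sgn (ε i) * a i|)
          / (Fintype.card (ι → Bool) : ℝ)) := by rw [hcard]


section Mink
variable {α β : Type*}

lemma sqrt_sum_sq_add (X : Finset α) (u v : α → ℝ) :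
    Real.sqrt (∑ x ∈ X, (u x + v x) ^ 2)
      ≤ Real.sqrt (∑ x ∈ X, u x ^ 2) + Real.sqrt (∑ x ∈ X, v x ^ 2) := by
  set P := ∑ x ∈ X, u x ^ 2 with hP
  set Q := ∑ x ∈ X, v x ^ 2 with hQ
  have hPn : 0 ≤ P := Finset.sum_nonneg (fun x _ => sq_nonneg _)
  have hQn : 0 ≤ Q := Finset.sum_nonneg (fun x _ => sq_nonneg _)
  have hcs : (∑ x ∈ X, u x * v x) ^ 2 ≤ P * Q := Finset.sum_mul_sq_le_sq_mul_sq X u v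
  have hcs' : ∑ x ∈ X, u x * v x ≤ Real.sqrt P * Real.sqrt Q := by
    have h1 : ∑ x ∈ X, u x * v x ≤ |∑ x ∈ X, u x * v x| := le_abs_self _
    have h2 : |∑ x ∈ X, u x * v x| = Real.sqrt ((∑ x ∈ X, u x * v x) ^ 2) :=
      (Real.sqrt_sq_eq_abs _).symm
    rw [← Real.sqrt_mul hPn]
    exact h1.trans (h2.le.trans (Real.sqrt_le_sqrt hcs))
  have hexp : ∑ x ∈ X, (u x + v x) ^ 2 = P + 2 * ∑ x ∈ X, u x * v x + Q := by
    rw [hP, hQ, Finset.mul_sum, ← Finset.sum_add_distrib, ← Finset.sum_add_distrib]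
    exact Finset.sum_congr rfl (fun x _ => by ring)
  
  have hle : ∑ x ∈ X, (u x + v x) ^ 2 ≤ (Real.sqrt P + Real.sqrt Q) ^ 2 := by
    rw [hexp]
    have e1 : (Real.sqrt P + Real.sqrt Q) ^ 2
        = P + 2 * (Real.sqrt P * Real.sqrt Q) + Q := by
      rw [add_sq, Real.sq_sqrt hPn, Real.sq_sqrt hQn]; ring
    rw [e1]
    linarith
  calc Real.sqrt (∑ x ∈ X, (u x + v x) ^ 2)
      ≤ Real.sqrt ((Real.sqrt P + Real.sqrt Q) ^ 2) := Real.sqrt_le_sqrt hle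
    _ = Real.sqrt P + Real.sqrt Q := by
        rw [Real.sqrt_sq (by positivity)]

lemma minkowski_sum (X : Finset α) (T : Finset β) (h : β → α → ℝ) :
    Real.sqrt (∑ x ∈ X, (∑ t ∈ T, |h t x|) ^ 2)
      ≤ ∑ t ∈ T, Real.sqrt (∑ x ∈ X, h t x ^ 2) := by
  classical
  induction T using Finset.induction_on with
  | empty => simp
  | insert t₀ T ht IH =>
    have e1 : ∀ x : α, ∑ t ∈ insert t₀ T, |h t x| = |h t₀ x| + ∑ t ∈ T, |h t x| :=
      fun x => Finset.sum_insert ht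
    rw [Finset.sum_congr rfl (fun x _ => by rw [e1 x]), Finset.sum_insert ht]
    have step := sqrt_sum_sq_add X (fun x => |h t₀ x|) (fun x => ∑ t ∈ T, |h t x|)
    have e2 : ∑ x ∈ X, |h t₀ x| ^ 2 = ∑ x ∈ X, h t₀ x ^ 2 :=
      Finset.sum_congr rfl (fun x _ => sq_abs _)
    rw [e2] at step
    exact step.trans (by linarith [IH])


end Mink
variable {m n : ℕ}

/-- slice grid: indices agreeing with `jb` off `s` -/
def Jset (jb : Fin m → Fin n) (s : Finset (Fin m)) : Finset (Fin m → Fin n) :=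
  Finset.univ.filter (fun j => ∀ k, k ∉ s → j k = jb k)

lemma Jset_empty (jb : Fin m → Fin n) : Jset jb ∅ = {jb} := by
  ext j
  simp only [Jset, Finset.mem_filter, Finset.mem_univ, true_and, Finset.mem_singleton]
  constructor
  · intro h; funext k; exact h k (Finset.notMem_empty k)
  · intro h k _; rw [h]

lemma mem_Jset {jb : Fin m → Fin n} {s : Finset (Fin m)} {j : Fin m → Fin n} :
    j ∈ Jset jb s ↔ ∀ k, k ∉ s → j k = jb k := by
  simp [Jset]

lemma sum_Jset_insert (jb : Fin m → Fin n) {s : Finset (Fin m)} {k₀ : Fin m}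
    (hk : k₀ ∉ s) (g : (Fin m → Fin n) → ℝ) :
    ∑ j ∈ Jset jb (insert k₀ s), g j
      = ∑ v : Fin n, ∑ j ∈ Jset jb s, g (Function.update j k₀ v) := by
  classical
  rw [← Finset.sum_product']
  -- now RHS is ∑ p ∈ univ ×ˢ Jset jb s, g (update p.2 k₀ p.1)
  refine Finset.sum_bij' (fun j _ => ((j k₀, Function.update j k₀ (jb k₀)) :
      Fin n × (Fin m → Fin n)))
    (fun p _ => Function.update p.2 k₀ p.1) ?_ ?_ ?_ ?_ ?_
  · intro j hj
    rw [mem_Jset] at hj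
    refine Finset.mem_product.2 ⟨Finset.mem_univ _, ?_⟩
    rw [mem_Jset]
    intro k hks
    by_cases hkk : k = k₀
    · subst hkk
      show Function.update j k (jb k) k = jb k
      simp
    · show Function.update j k₀ (jb k₀) k = jb k
      rw [Function.update_of_ne hkk]
      exact hj k (by simp [hks, hkk])
  · intro p hp
    have hp2 := (Finset.mem_product.1 hp).2
    rw [mem_Jset] at hp2 ⊢
    intro k hks
    have hkk : k ≠ k₀ := fun e => hks (e ▸ Finset.mem_insert_self k₀ s)
    show Function.update p.2 k₀ p.1 k = jb k
    rw [Function.update_of_ne hkk]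
    exact hp2 k (fun hmem => hks (Finset.mem_insert_of_mem hmem))
  · intro j hj
    show Function.update (Function.update j k₀ (jb k₀)) k₀ (j k₀) = j
    rw [Function.update_idem]
    exact Function.update_eq_self k₀ j
  · intro p hp
    have hp2 := (Finset.mem_product.1 hp).2
    rw [mem_Jset] at hp2
    have h1 : p.2 k₀ = jb k₀ := hp2 k₀ hk
    show ((Function.update p.2 k₀ p.1 k₀, Function.update (Function.update p.2 k₀ p.1) k₀ (jb k₀))
        : Fin n × (Fin m → Fin n)) = p
    rw [Function.update_idem, Function.update_self, ← h1, Function.update_eq_self]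
  · intro j hj
    show g j = g (Function.update (Function.update j k₀ (jb k₀)) k₀ (j k₀))
    rw [Function.update_idem, Function.update_eq_self]

/-- averaging out one slot of signs -/
def pairEquiv (k₀ : Fin m) :
    ((Fin m → Fin n → Bool) × (Fin n → Bool)) ≃ ((Fin m → Fin n → Bool) × (Fin n → Bool)) where
  toFun p := (Function.update p.1 k₀ p.2, p.1 k₀)
  invFun p := (Function.update p.1 k₀ p.2, p.1 k₀)
  left_inv p := by
    ext1
    · simp [Function.update_idem]
    · simp
  right_inv p := by
    ext1
    · simp [Function.update_idem]
    · simp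

lemma sum_update_avg (k₀ : Fin m) (F : (Fin m → Fin n → Bool) → ℝ) :
    ∑ δ : Fin n → Bool, ∑ ε : Fin m → Fin n → Bool, F (Function.update ε k₀ δ)
      = (Fintype.card (Fin n → Bool) : ℝ) * ∑ ε : Fin m → Fin n → Bool, F ε := by
  have h1 : ∑ p : (Fin m → Fin n → Bool) × (Fin n → Bool), F (Function.update p.1 k₀ p.2)
      = ∑ p : (Fin m → Fin n → Bool) × (Fin n → Bool), F p.1 := by
    have := Equiv.sum_comp (pairEquiv k₀)
      (fun p : (Fin m → Fin n → Bool) × (Fin n → Bool) => F p.1)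
    calc ∑ p : (Fin m → Fin n → Bool) × (Fin n → Bool), F (Function.update p.1 k₀ p.2)
        = ∑ p : (Fin m → Fin n → Bool) × (Fin n → Bool), F (((pairEquiv k₀) p).1) := rfl
      _ = ∑ p : (Fin m → Fin n → Bool) × (Fin n → Bool), F p.1 := this
  have h2 : ∑ p : (Fin m → Fin n → Bool) × (Fin n → Bool), F (Function.update p.1 k₀ p.2)
      = ∑ ε : Fin m → Fin n → Bool, ∑ δ : Fin n → Bool, F (Function.update ε k₀ δ) :=
    Fintype.sum_prod_type _
  have h3 : ∑ p : (Fin m → Fin n → Bool) × (Fin n → Bool), F p.1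
      = (Fintype.card (Fin n → Bool) : ℝ) * ∑ ε : Fin m → Fin n → Bool, F ε := by
    rw [Fintype.sum_prod_type]
    simp only [Finset.sum_const, Finset.card_univ, nsmul_eq_mul]
    rw [Finset.mul_sum]
  rw [Finset.sum_comm]
  rw [← h2, h1, h3]



theorem multiKhinchin (jb : Fin m → Fin n) (s : Finset (Fin m)) (c : (Fin m → Fin n) → ℝ) :
    Real.sqrt (∑ j ∈ Jset jb s, c j ^ 2)
      ≤ Real.sqrt 2 ^ s.card *
        ((∑ ε : Fin m → Fin n → Bool,
            |∑ j ∈ Jset jb s, (∏ k ∈ s, sgn (ε k (j k))) * c j|)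
          / (Fintype.card (Fin m → Fin n → Bool) : ℝ)) := by
  classical
  induction s using Finset.induction_on generalizing c with
  | empty =>
    rw [Jset_empty]
    have hMc : (0:ℝ) < (Fintype.card (Fin m → Fin n → Bool) : ℝ) := by
      exact_mod_cast Fintype.card_pos
    simp only [Finset.sum_singleton, Finset.prod_empty, one_mul, Finset.card_empty, pow_zero]
    rw [Real.sqrt_sq_eq_abs, Finset.sum_const, Finset.card_univ, nsmul_eq_mul]
    rw [mul_comm, mul_div_assoc, div_self hMc.ne', mul_one]
  | insert k₀ s hk IH =>
    set Mc : ℝ := (Fintype.card (Fin m → Fin n → Bool) : ℝ) with hMcdef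
    set Dc : ℝ := (Fintype.card (Fin n → Bool) : ℝ) with hDcdef
    have hMc : (0:ℝ) < Mc := by rw [hMcdef]; exact_mod_cast Fintype.card_pos
    have hDc : (0:ℝ) < Dc := by rw [hDcdef]; exact_mod_cast Fintype.card_pos
    set d : (Fin n → Bool) → (Fin m → Fin n) → ℝ :=
      fun δ j' => ∑ v : Fin n, sgn (δ v) * c (Function.update j' k₀ v) with hd
    set V : (Fin m → Fin n → Bool) → ℝ :=
      fun ε' => ∑ j ∈ Jset jb (insert k₀ s),
        (∏ k ∈ insert k₀ s, sgn (ε' k (j k))) * c j with hV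
    -- 1) split the square sum
    have hsplit : ∑ j ∈ Jset jb (insert k₀ s), c j ^ 2
        = ∑ j' ∈ Jset jb s, ∑ v : Fin n, c (Function.update j' k₀ v) ^ 2 := by
      rw [sum_Jset_insert jb hk (fun j => c j ^ 2)]
      exact Finset.sum_comm
    -- 2) pointwise scalar Khinchin
    have hpt : ∀ j' : Fin m → Fin n,
        ∑ v : Fin n, c (Function.update j' k₀ v) ^ 2
          ≤ 2 * ((∑ δ : Fin n → Bool, |d δ j'|) / Dc) ^ 2 := by
      intro j'
      have hK := khinchin_L1 (fun v => c (Function.update j' k₀ v))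
      have hnn : (0:ℝ) ≤ ∑ v : Fin n, c (Function.update j' k₀ v) ^ 2 :=
        Finset.sum_nonneg (fun v _ => sq_nonneg _)
      have h1 : Real.sqrt (∑ v : Fin n, c (Function.update j' k₀ v) ^ 2)
          ≤ Real.sqrt 2 * ((∑ δ : Fin n → Bool, |d δ j'|) / Dc) := hK
      have h2 := pow_le_pow_left₀ (Real.sqrt_nonneg _) h1 2
      rw [Real.sq_sqrt hnn] at h2
      calc ∑ v : Fin n, c (Function.update j' k₀ v) ^ 2
          ≤ (Real.sqrt 2 * ((∑ δ : Fin n → Bool, |d δ j'|) / Dc)) ^ 2 := h2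
        _ = 2 * ((∑ δ : Fin n → Bool, |d δ j'|) / Dc) ^ 2 := by
            rw [mul_pow, Real.sq_sqrt (by norm_num : (0:ℝ) ≤ 2)]
    -- 3) summed bound
    set AvS : ℝ := ∑ j' ∈ Jset jb s, (∑ δ : Fin n → Bool, |d δ j'|) ^ 2 with hAvS
    have hAvSnn : 0 ≤ AvS := Finset.sum_nonneg (fun j' _ => sq_nonneg _)
    have h3 : ∑ j ∈ Jset jb (insert k₀ s), c j ^ 2 ≤ 2 * AvS / Dc ^ 2 := by
      rw [hsplit]
      calc ∑ j' ∈ Jset jb s, ∑ v : Fin n, c (Function.update j' k₀ v) ^ 2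
          ≤ ∑ j' ∈ Jset jb s, 2 * ((∑ δ : Fin n → Bool, |d δ j'|) / Dc) ^ 2 :=
            Finset.sum_le_sum (fun j' _ => hpt j')
        _ = 2 * AvS / Dc ^ 2 := by
            rw [hAvS, Finset.mul_sum, Finset.sum_div]
            exact Finset.sum_congr rfl (fun j' _ => by rw [div_pow]; ring)
    -- 4) take square roots and apply Minkowski
    have h4 : Real.sqrt (∑ j ∈ Jset jb (insert k₀ s), c j ^ 2)
        ≤ Real.sqrt 2 / Dc * ∑ δ : Fin n → Bool,
            Real.sqrt (∑ j' ∈ Jset jb s, d δ j' ^ 2) := by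
      have hs1 : Real.sqrt (∑ j ∈ Jset jb (insert k₀ s), c j ^ 2)
          ≤ Real.sqrt (2 * AvS / Dc ^ 2) := Real.sqrt_le_sqrt h3
      have hs2 : Real.sqrt (2 * AvS / Dc ^ 2) = Real.sqrt 2 * Real.sqrt AvS / Dc := by
        have he : 2 * AvS / Dc ^ 2 = (Real.sqrt 2 * Real.sqrt AvS / Dc) ^ 2 := by
          rw [div_pow, mul_pow, Real.sq_sqrt (by norm_num : (0:ℝ) ≤ 2), Real.sq_sqrt hAvSnn]
        rw [he, Real.sqrt_sq (by positivity)]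
      have hs3 : Real.sqrt AvS ≤ ∑ δ : Fin n → Bool,
          Real.sqrt (∑ j' ∈ Jset jb s, d δ j' ^ 2) := by
        rw [hAvS]
        have hre : ∀ j' : Fin m → Fin n,
            (∑ δ : Fin n → Bool, |d δ j'|) ^ 2 = (∑ δ ∈ Finset.univ, |d δ j'|) ^ 2 := by
          intro j'; rfl
        exact minkowski_sum (Jset jb s) Finset.univ (fun δ j' => d δ j')
      calc Real.sqrt (∑ j ∈ Jset jb (insert k₀ s), c j ^ 2)
          ≤ Real.sqrt 2 * Real.sqrt AvS / Dc := by rw [← hs2]; exact hs1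
        _ ≤ Real.sqrt 2 / Dc * ∑ δ : Fin n → Bool,
              Real.sqrt (∑ j' ∈ Jset jb s, d δ j' ^ 2) := by
            have hc : 0 ≤ Real.sqrt 2 / Dc := by positivity
            have := mul_le_mul_of_nonneg_left hs3 hc
            calc Real.sqrt 2 * Real.sqrt AvS / Dc
                = Real.sqrt 2 / Dc * Real.sqrt AvS := by ring
              _ ≤ _ := this
    -- 5) induction hypothesis with the W/V identity
    have h6 : ∀ (δ : Fin n → Bool) (ε : Fin m → Fin n → Bool),
        ∑ j' ∈ Jset jb s, (∏ k ∈ s, sgn (ε k (j' k))) * d δ j'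
          = V (Function.update ε k₀ δ) := by
      intro δ ε
      rw [hV]
      dsimp only
      rw [sum_Jset_insert jb hk
        (fun j => (∏ k ∈ insert k₀ s, sgn ((Function.update ε k₀ δ) k (j k))) * c j)]
      rw [Finset.sum_comm]
      refine Finset.sum_congr rfl (fun j' hj' => ?_)
      rw [hd, Finset.mul_sum]
      refine Finset.sum_congr rfl (fun v _ => ?_)
      have hprod : ∏ k ∈ insert k₀ s,
          sgn ((Function.update ε k₀ δ) k ((Function.update j' k₀ v) k))
            = sgn (δ v) * ∏ k ∈ s, sgn (ε k (j' k)) := by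
        rw [Finset.prod_insert hk]
        congr 1
        · rw [Function.update_self, Function.update_self]
        · refine Finset.prod_congr rfl (fun k hks => ?_)
          have hne : k ≠ k₀ := fun e => hk (e ▸ hks)
          rw [Function.update_of_ne hne, Function.update_of_ne hne]
      rw [hprod]
      ring
    have h5 : ∀ δ : Fin n → Bool,
        Real.sqrt (∑ j' ∈ Jset jb s, d δ j' ^ 2)
          ≤ Real.sqrt 2 ^ s.card *
            ((∑ ε : Fin m → Fin n → Bool, |V (Function.update ε k₀ δ)|) / Mc) := by
      intro δ
      have := IH (d δ)
      calc Real.sqrt (∑ j' ∈ Jset jb s, d δ j' ^ 2)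
          ≤ Real.sqrt 2 ^ s.card *
            ((∑ ε : Fin m → Fin n → Bool,
              |∑ j' ∈ Jset jb s, (∏ k ∈ s, sgn (ε k (j' k))) * d δ j'|) / Mc) := this
        _ = Real.sqrt 2 ^ s.card *
            ((∑ ε : Fin m → Fin n → Bool, |V (Function.update ε k₀ δ)|) / Mc) := by
            congr 1
            rw [Finset.sum_congr rfl (fun ε _ => by rw [h6 δ ε])]
    have h8 : ∑ δ : Fin n → Bool, ∑ ε : Fin m → Fin n → Bool, |V (Function.update ε k₀ δ)|
        = Dc * ∑ ε : Fin m → Fin n → Bool, |V ε| :=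
      sum_update_avg k₀ (fun ε' => |V ε'|)
    have hfinal : Real.sqrt (∑ j ∈ Jset jb (insert k₀ s), c j ^ 2)
        ≤ Real.sqrt 2 ^ (s.card + 1) *
          ((∑ ε : Fin m → Fin n → Bool, |V ε|) / Mc) := by
      calc Real.sqrt (∑ j ∈ Jset jb (insert k₀ s), c j ^ 2)
          ≤ Real.sqrt 2 / Dc * ∑ δ : Fin n → Bool,
              Real.sqrt (∑ j' ∈ Jset jb s, d δ j' ^ 2) := h4
        _ ≤ Real.sqrt 2 / Dc * ∑ δ : Fin n → Bool,
              (Real.sqrt 2 ^ s.card *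
                ((∑ ε : Fin m → Fin n → Bool, |V (Function.update ε k₀ δ)|) / Mc)) :=
            mul_le_mul_of_nonneg_left (Finset.sum_le_sum (fun δ _ => h5 δ)) (by positivity)
        _ = Real.sqrt 2 / Dc * (Real.sqrt 2 ^ s.card / Mc *
              (Dc * ∑ ε : Fin m → Fin n → Bool, |V ε|)) := by
            rw [← h8, Finset.mul_sum, Finset.mul_sum, Finset.mul_sum]
            exact Finset.sum_congr rfl (fun δ _ => by ring)
        _ = Real.sqrt 2 ^ (s.card + 1) *
              ((∑ ε : Fin m → Fin n → Bool, |V ε|) / Mc) := by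
            rw [pow_succ]
            field_simp
    rw [Finset.card_insert_of_notMem hk]
    exact hfinal


end BHmk

open BHmk in
/-- Bohnenblust–Hille-type mixed inequality on `ℓ_∞^n`: for fixed `i` and fixed `j₀`,
`(∑_{ĵᵢ} |T|²)^{1/2}` is bounded by `(√2)^{m-1}` times the Rademacher average
(expectation over uniform signs in the other coordinates), which in turn is bounded by
`(√2)^{m-1}` times the norm of the restricted `(m-1)`-linear form `T(e_{j₀},·,…,·)`. -/
theorem multiple_khinchin_slice_estimate (m : ℕ) (hm : 2 ≤ m) (n : ℕ)
    (T : ContinuousMultilinearMap ℝ (fun _ : Fin m => (Fin n → ℝ)) ℝ)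
    (i : Fin m) (j₀ : Fin n) :
    (∑ j ∈ Finset.univ.filter (fun j : Fin m → Fin n => j i = j₀),
        |T (fun k => Pi.single (j k) 1)| ^ (2 : ℝ)) ^ ((1 : ℝ) / 2)
      ≤ Real.sqrt 2 ^ (m - 1) *
        ((∑ ε : Fin m → Fin n → Bool,
            |∑ j ∈ Finset.univ.filter (fun j : Fin m → Fin n => j i = j₀),
                (∏ k ∈ Finset.univ.erase i, (if ε k (j k) then (1 : ℝ) else -1)) *
                  T (fun k => Pi.single (j k) 1)|) /
          (Fintype.card (Fin m → Fin n → Bool))) ∧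
    Real.sqrt 2 ^ (m - 1) *
        ((∑ ε : Fin m → Fin n → Bool,
            |∑ j ∈ Finset.univ.filter (fun j : Fin m → Fin n => j i = j₀),
                (∏ k ∈ Finset.univ.erase i, (if ε k (j k) then (1 : ℝ) else -1)) *
                  T (fun k => Pi.single (j k) 1)|) /
          (Fintype.card (Fin m → Fin n → Bool)))
      ≤ Real.sqrt 2 ^ (m - 1) *
        sSup {c : ℝ | ∃ x : Fin m → (Fin n → ℝ),
          x i = Pi.single j₀ 1 ∧ (∀ k, k ≠ i → ‖x k‖ ≤ 1) ∧ c = |T x|} := by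
  classical
  have hsgn : ∀ b : Bool, (if b then (1:ℝ) else -1) = sgn b := fun b => rfl
  set c : (Fin m → Fin n) → ℝ := fun j => T (fun k => Pi.single (j k) 1) with hc
  have hJ : Finset.univ.filter (fun j : Fin m → Fin n => j i = j₀)
      = Jset (fun _ => j₀) (Finset.univ.erase i) := by
    ext j
    simp only [Jset, Finset.mem_filter, Finset.mem_univ, true_and]
    constructor
    · intro h k hk
      have : k = i := by
        by_contra hne
        exact hk (Finset.mem_erase.2 ⟨hne, Finset.mem_univ k⟩)
      rw [this, h]
    · intro h
      exact h i (fun hmem => (Finset.mem_erase.1 hmem).1 rfl)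
  have hcard : (Finset.univ.erase i).card = m - 1 := by
    rw [Finset.card_erase_of_mem (Finset.mem_univ i), Finset.card_univ, Fintype.card_fin]
  constructor
  · -- first inequality
    have hML := multiKhinchin (fun _ => j₀) (Finset.univ.erase i) c
    rw [hcard] at hML
    have hLHS : (∑ j ∈ Finset.univ.filter (fun j : Fin m → Fin n => j i = j₀),
        |T (fun k => Pi.single (j k) 1)| ^ (2 : ℝ)) ^ ((1 : ℝ) / 2)
        = Real.sqrt (∑ j ∈ Jset (fun _ => j₀) (Finset.univ.erase i), c j ^ 2) := by
      rw [← hJ, Real.sqrt_eq_rpow]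
      congr 1
      refine Finset.sum_congr rfl (fun j _ => ?_)
      rw [Real.rpow_two, sq_abs]
    rw [hLHS, hJ]
    exact hML
  · -- second inequality
    set Sset : Set ℝ := {c : ℝ | ∃ x : Fin m → (Fin n → ℝ),
      x i = Pi.single j₀ 1 ∧ (∀ k, k ≠ i → ‖x k‖ ≤ 1) ∧ c = |T x|} with hSset
    have hMc : (0:ℝ) < (Fintype.card (Fin m → Fin n → Bool) : ℝ) := by
      exact_mod_cast Fintype.card_pos
    -- for each ε build the test vector
    have key : ∀ ε : Fin m → Fin n → Bool,
        |∑ j ∈ Finset.univ.filter (fun j : Fin m → Fin n => j i = j₀),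
            (∏ k ∈ Finset.univ.erase i, (if ε k (j k) then (1 : ℝ) else -1)) *
              T (fun k => Pi.single (j k) 1)| ∈ Sset := by
      intro ε
      set x : Fin m → (Fin n → ℝ) := fun k =>
        if k = i then Pi.single j₀ 1 else (fun v => sgn (ε k v)) with hx
      set cc : Fin m → Fin n → ℝ := fun k v =>
        if k = i then (if v = j₀ then 1 else 0) else sgn (ε k v) with hcc
      have hxsum : ∀ k, x k = ∑ v : Fin n, cc k v • (Pi.single v 1 : Fin n → ℝ) := by
        intro k
        funext w
        have hs : (∑ v : Fin n, cc k v • (Pi.single v 1 : Fin n → ℝ)) w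
            = ∑ v : Fin n, cc k v * (Pi.single v 1 : Fin n → ℝ) w := by
          rw [Finset.sum_apply]
          exact Finset.sum_congr rfl (fun v _ => rfl)
        rw [hs]
        have hs2 : ∀ v : Fin n, cc k v * (Pi.single v 1 : Fin n → ℝ) w
            = if w = v then cc k v else 0 := by
          intro v
          rw [Pi.single_apply]
          by_cases h : w = v <;> simp [h]
        rw [Finset.sum_congr rfl (fun v _ => hs2 v), Finset.sum_ite_eq Finset.univ w (cc k)]
        simp only [Finset.mem_univ, if_true]
        by_cases hki : k = i
        · subst hki
          simp [hx, hcc, Pi.single_apply]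
        · simp [hx, hcc, hki]
      have hexp : T x = ∑ j ∈ Finset.univ.filter (fun j : Fin m → Fin n => j i = j₀),
          (∏ k ∈ Finset.univ.erase i, (if ε k (j k) then (1 : ℝ) else -1)) *
            T (fun k => Pi.single (j k) 1) := by
        have h1 : T x = T (fun k => ∑ v : Fin n, cc k v • (Pi.single v 1 : Fin n → ℝ)) := by
          congr 1
          funext k
          exact hxsum k
        rw [h1]
        have h2 := T.toMultilinearMap.map_sum
          (fun k (v : Fin n) => cc k v • (Pi.single v 1 : Fin n → ℝ))
        have h3 : ∀ j : Fin m → Fin n,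
            T (fun k => cc k (j k) • (Pi.single (j k) 1 : Fin n → ℝ))
              = (∏ k : Fin m, cc k (j k)) • T (fun k => Pi.single (j k) 1) :=
          fun j => T.toMultilinearMap.map_smul_univ (fun k => cc k (j k))
            (fun k => Pi.single (j k) 1)
        calc T (fun k => ∑ v : Fin n, cc k v • (Pi.single v 1 : Fin n → ℝ))
            = ∑ j : Fin m → Fin n, T (fun k => cc k (j k) • (Pi.single (j k) 1 : Fin n → ℝ)) := h2
          _ = ∑ j : Fin m → Fin n, (∏ k : Fin m, cc k (j k)) * T (fun k => Pi.single (j k) 1) := by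
              refine Finset.sum_congr rfl (fun j _ => ?_)
              rw [h3 j, smul_eq_mul]
          _ = ∑ j ∈ Finset.univ.filter (fun j : Fin m → Fin n => j i = j₀),
              (∏ k ∈ Finset.univ.erase i, (if ε k (j k) then (1 : ℝ) else -1)) *
                T (fun k => Pi.single (j k) 1) := by
              rw [Finset.sum_filter]
              refine Finset.sum_congr rfl (fun j _ => ?_)
              have hsplit : ∏ k : Fin m, cc k (j k)
                  = cc i (j i) * ∏ k ∈ Finset.univ.erase i, cc k (j k) :=
                (Finset.mul_prod_erase Finset.univ _ (Finset.mem_univ i)).symm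
              have hprod : ∏ k ∈ Finset.univ.erase i, cc k (j k)
                  = ∏ k ∈ Finset.univ.erase i, (if ε k (j k) then (1 : ℝ) else -1) := by
                refine Finset.prod_congr rfl (fun k hk => ?_)
                have hki : k ≠ i := (Finset.mem_erase.1 hk).1
                rw [hcc]
                simp only [if_neg hki]
                rfl
              have hci : cc i (j i) = if j i = j₀ then (1:ℝ) else 0 := by simp [hcc]
              rw [hsplit, hprod, hci]
              by_cases hj : j i = j₀
              · simp only [if_pos hj]
                ring
              · simp only [if_neg hj]
                ring
      refine ⟨x, ?_, ?_, ?_⟩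
      · rw [hx]; simp
      · intro k hki
        rw [hx]
        simp only [if_neg hki]
        refine (pi_norm_le_iff_of_nonneg (by norm_num : (0:ℝ) ≤ 1)).2 (fun v => ?_)
        rw [Real.norm_eq_abs, abs_sgn]
      · rw [hexp]
    -- boundedness
    have hbdd : BddAbove Sset := by
      refine ⟨‖T‖, fun y hy => ?_⟩
      obtain ⟨x, hxi, hxk, hyx⟩ := hy
      have h1 : |T x| ≤ ‖T‖ * ∏ k : Fin m, ‖x k‖ := T.le_opNorm x
      have h2 : ∏ k : Fin m, ‖x k‖ ≤ 1 := by
        refine Finset.prod_le_one (fun k _ => norm_nonneg _) (fun k _ => ?_)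
        by_cases hki : k = i
        · subst hki
          rw [hxi, Pi.norm_single, norm_one]
        · exact hxk k hki
      rw [hyx]
      nlinarith [norm_nonneg T, abs_nonneg (T x)]
    refine mul_le_mul_of_nonneg_left ?_ (by positivity)
    rw [div_le_iff₀ hMc]
    have : ∀ ε : Fin m → Fin n → Bool,
        |∑ j ∈ Finset.univ.filter (fun j : Fin m → Fin n => j i = j₀),
            (∏ k ∈ Finset.univ.erase i, (if ε k (j k) then (1 : ℝ) else -1)) *
              T (fun k => Pi.single (j k) 1)| ≤ sSup Sset :=
      fun ε => le_csSup hbdd (key ε)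
    calc ∑ ε : Fin m → Fin n → Bool,
          |∑ j ∈ Finset.univ.filter (fun j : Fin m → Fin n => j i = j₀),
            (∏ k ∈ Finset.univ.erase i, (if ε k (j k) then (1 : ℝ) else -1)) *
              T (fun k => Pi.single (j k) 1)|
        ≤ ∑ ε : Fin m → Fin n → Bool, sSup Sset := Finset.sum_le_sum (fun ε _ => this ε)
      _ = sSup Sset * (Fintype.card (Fin m → Fin n → Bool) : ℝ) := by
          rw [Finset.sum_const, Finset.card_univ, nsmul_eq_mul]
          ring
end
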